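/- arXiv:1812.08636 — 4 statements merged into one kernel-verified Lean document; each statement's English description precedes it below -/
import Mathlib

section
/- Let (Ω, F, P) be a probability space with a filtration (F_n)_{n≥1}, let T be an almost surely finite stopping time with respect to (F_n)_{n≥1}, and let X be a non-negative bounded random variable such that for each n ≥ 1 and every m ≥ n one has E[X | F_T] = E[X | F_m] almost surely on the event {T = n}. Then E[X | F_T] = E[X | F_∞] almost surely, where F_∞ := σ(⋃_{n≥1} F_n). -/
open MeasureTheory Filter

/-- If `T` is an (a.s. finite) stopping time with respect to a filtration
`(ℱ n)` and `X` is a non-negative bounded random variable such that for each `n` and every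
`m ≥ n` one has `E[X | ℱ_T] = E[X | ℱ m]` a.s. on `{T = n}`, then
`E[X | ℱ_T] = E[X | ℱ_∞]` a.s., where `ℱ_∞ = σ(⋃ n, ℱ n) = ⨆ n, ℱ n`. -/
theorem stmt0 {Ω : Type*} {m0 : MeasurableSpace Ω} {P : Measure Ω} [IsProbabilityMeasure P]
    (ℱ : Filtration ℕ m0) (T : Ω → ℕ) (hT : IsStoppingTime ℱ (fun ω => (T ω : WithTop ℕ)))
    (X : Ω → ℝ) (hXmeas : Measurable X) (hXnonneg : ∀ ω, 0 ≤ X ω)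
    (C : ℝ) (hXbdd : ∀ ω, X ω ≤ C)
    (hcond : ∀ n : ℕ, ∀ m ≥ n, ∀ᵐ ω ∂P, T ω = n →
      (P[X | hT.measurableSpace]) ω = (P[X | ℱ m]) ω) :
    P[X | hT.measurableSpace] =ᵐ[P] P[X | ⨆ n, (ℱ n : MeasurableSpace Ω)] := by
  set g := P[X | ⨆ n, (ℱ n : MeasurableSpace Ω)] with hgdef
  have hgint : Integrable g P := integrable_condExp
  have hgmeas : StronglyMeasurable[⨆ n, (ℱ n : MeasurableSpace Ω)] g :=
    stronglyMeasurable_condExp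
  have htend := hgint.tendsto_ae_condExp hgmeas
  have hcc : ∀ n, P[g | ℱ n] =ᵐ[P] P[X | ℱ n] := fun n =>
    condExp_condExp_of_le (le_iSup (fun k => (ℱ k : MeasurableSpace Ω)) n)
      (iSup_le fun k => ℱ.le k)
  have hcc' : ∀ᵐ ω ∂P, ∀ n, (P[g | ℱ n]) ω = (P[X | ℱ n]) ω := ae_all_iff.2 hcc
  have hcond' : ∀ᵐ ω ∂P, ∀ n : ℕ, ∀ m : ℕ, m ≥ n → T ω = n →
      (P[X | hT.measurableSpace]) ω = (P[X | ℱ m]) ω := by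
    rw [ae_all_iff]
    intro n
    rw [ae_all_iff]
    intro m
    by_cases h : m ≥ n
    · filter_upwards [hcond n m h] with ω hω _ hT'
      exact hω hT'
    · exact ae_of_all _ fun ω h' => absurd h' h
  filter_upwards [htend, hcc', hcond'] with ω hωt hωc hωe
  have htend' : Tendsto (fun n => (P[X | ℱ n]) ω) atTop (nhds (g ω)) :=
    hωt.congr fun n => hωc n
  have hconst : Tendsto (fun n => (P[X | ℱ n]) ω) atTop
      (nhds ((P[X | hT.measurableSpace]) ω)) := by
    refine Tendsto.congr' ?_ tendsto_const_nhds
    filter_upwards [eventually_ge_atTop (T ω)] with m hm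
    exact hωe (T ω) m hm rfl
  exact tendsto_nhds_unique hconst htend'
end

section
/- Let ((ξ_{u,i})_{i≥0})_{u∈𝕌} be an i.i.d. family of random sequences with values in the set of sequences (x_i)_{i≥0} with x_i ∈ [0,1) for all i and Σ_{i≥0} x_i = 1, such that P(ξ_0 > 0 and ξ_1 > 0) = 1, and let β ∈ (0,1] satisfy E[ξ_0^β + ξ_1^β] = 1. Then for every integer p ≥ 1 one has sup_{n≥0} E[L_n^p] < ∞, where L_n := Σ_{u∈{0,1}^n} ξ̄_u^β; in fact sup_{n≥0} E[L_n^p] ≤ f(p) where f(1) := 1 and recursively f(p) := (Σ_{j=1}^{p−1} binom(p,j) f(j) f(p−j)) / (1 − E[ξ_0^{pβ} + ξ_1^{pβ}]) for p ≥ 2. -/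
open MeasureTheory ProbabilityTheory Filter
open scoped ENNReal Topology

noncomputable section

/-- `ξ̄_u`: the product of the entries of the sequences attached along the path from the
root to the word `u`, i.e. `ξ̄_{u₁…uₙ} = ∏_{k=1}^n ξ_{u₁…u_{k-1}, u_k}`, with `ξ̄_∅ = 1`. -/
def xibar {Ω : Type*} (ξ : List ℕ → ℕ → Ω → ℝ) (u : List ℕ) (ω : Ω) : ℝ :=
  ∏ k ∈ Finset.range u.length, ξ (u.take k) (u.getD k 0) ω

/-- `L_n = Σ_{u ∈ {0,1}^n} ξ̄_u^β`, with words of length `n` over `{0,1}` encoded as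
functions `Fin n → Fin 2`. -/
def Lmart {Ω : Type*} (ξ : List ℕ → ℕ → Ω → ℝ) (β : ℝ) (n : ℕ) (ω : Ω) : ℝ :=
  ∑ v : Fin n → Fin 2, (xibar ξ (List.ofFn fun i => (v i : ℕ)) ω) ^ β

namespace Stmt3Aux


/-- shift of the family along child `j`. -/
def shift {Ω : Type*} (j : ℕ) (ξ : List ℕ → ℕ → Ω → ℝ) : List ℕ → ℕ → Ω → ℝ :=
  fun u => ξ (j :: u)

/-- canonical recursive spaces -/
def C : ℕ → Type
  | 0 => Unit
  | n+1 => (ℕ → ℝ) × C n × C n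

instance instMC : ∀ n, MeasurableSpace (C n)
  | 0 => (inferInstance : MeasurableSpace Unit)
  | n+1 => @Prod.instMeasurableSpace _ _ _ (@Prod.instMeasurableSpace _ _ (instMC n) (instMC n))

/-- canonical measures -/
def nu (μ0 : Measure (ℕ → ℝ)) : ∀ n, Measure (C n)
  | 0 => Measure.dirac ()
  | n+1 => μ0.prod ((nu μ0 n).prod (nu μ0 n))

/-- canonical martingale functional -/
def ell (β : ℝ) : ∀ n, C n → ℝ
  | 0, _ => 1
  | n+1, c => (c.1 0) ^ β * ell β n c.2.1 + (c.1 1) ^ β * ell β n c.2.2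

/-- encoding of the process into the canonical space -/
def En : ∀ n, (List ℕ → ℕ → ℝ) → C n
  | 0, _ => ()
  | n+1, g => (g [], En n (fun u => g (0 :: u)), En n (fun u => g (1 :: u)))

/-- words over {0,1} of length < n -/
def WS : ℕ → Finset (List ℕ)
  | 0 => ∅
  | n+1 => insert [] ((WS n).image (0 :: ·) ∪ (WS n).image (1 :: ·))

lemma nu_prob (μ0 : Measure (ℕ → ℝ)) [IsProbabilityMeasure μ0] :
    ∀ n, IsProbabilityMeasure (nu μ0 n)
  | 0 => by rw [nu]; exact ⟨Measure.dirac_apply_of_mem (Set.mem_univ _)⟩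
  | n+1 => by
      haveI := nu_prob μ0 n
      rw [nu]
      have h3 : IsProbabilityMeasure (μ0.prod ((nu μ0 n).prod (nu μ0 n))) := inferInstance
      exact h3

lemma measurable_rpowc {q : ℝ} (hq : 0 ≤ q) : Measurable fun x : ℝ => x ^ q :=
  (Real.continuous_rpow_const hq).measurable

lemma measurable_ell {β : ℝ} (hβ : 0 ≤ β) : ∀ n, Measurable (ell β n)
  | 0 => measurable_const
  | n+1 => by
      have h := measurable_ell hβ n
      refine Measurable.add ?_ ?_
      · exact ((measurable_rpowc hβ).comp
          ((measurable_pi_apply 0).comp measurable_fst)).mul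
          (h.comp (measurable_fst.comp measurable_snd))
      · exact ((measurable_rpowc hβ).comp
          ((measurable_pi_apply 1).comp measurable_fst)).mul
          (h.comp (measurable_snd.comp measurable_snd))

lemma measurable_En : ∀ n, Measurable (En n)
  | 0 => measurable_const
  | n+1 => by
      have h := measurable_En n
      refine Measurable.prod (measurable_pi_apply ([] : List ℕ)) (Measurable.prod ?_ ?_) <;>
      · refine h.comp (measurable_pi_lambda _ fun u => measurable_pi_apply _)

lemma En_congr : ∀ n, ∀ {x y : List ℕ → ℕ → ℝ}, (∀ u ∈ WS n, x u = y u) → En n x = En n y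
  | 0, x, y, _ => rfl
  | n+1, x, y, h => by
      have h0 : ∀ u ∈ WS n, x (0 :: u) = y (0 :: u) := fun u hu =>
        h _ (by rw [WS]; exact Finset.mem_insert_of_mem (Finset.mem_union_left _
          (Finset.mem_image_of_mem _ hu)))
      have h1 : ∀ u ∈ WS n, x (1 :: u) = y (1 :: u) := fun u hu =>
        h _ (by rw [WS]; exact Finset.mem_insert_of_mem (Finset.mem_union_right _
          (Finset.mem_image_of_mem _ hu)))
      have hnil : x [] = y [] := h _ (by rw [WS]; exact Finset.mem_insert_self _ _)
      rw [En, En, hnil, En_congr n h0, En_congr n h1]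


lemma iIndepFun_precomp {Ω ι ι' B : Type*} [MeasurableSpace Ω] {mB : MeasurableSpace B}
    {μ : Measure Ω} {f : ι → Ω → B} (g : ι' → ι) (hg : Function.Injective g)
    (h : iIndepFun (m := fun _ => mB) f μ) :
    iIndepFun (m := fun _ : ι' => mB) (fun i => f (g i)) μ := by
  classical
  rw [iIndepFun_iff_measure_inter_preimage_eq_mul] at h ⊢
  intro S sets hsets
  set sets' : ι → Set B := fun i =>
    if h' : ∃ j, j ∈ S ∧ g j = i then sets h'.choose else Set.univ
  have key : ∀ j ∈ S, sets' (g j) = sets j := by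
    intro j hj
    have h' : ∃ j', j' ∈ S ∧ g j' = g j := ⟨j, hj, rfl⟩
    have := h'.choose_spec
    have hjj : h'.choose = j := hg this.2
    simp only [sets', dif_pos h', hjj]
  have hmeas' : ∀ i, i ∈ S.image g → MeasurableSet (sets' i) := by
    intro i hi
    rcases Finset.mem_image.1 hi with ⟨j, hj, rfl⟩
    rw [key j hj]; exact hsets j hj
  have := h (S.image g) hmeas'
  rw [Finset.set_biInter_finset_image, Finset.prod_image (fun a _ b _ hab => hg hab)] at this
  calc μ (⋂ i ∈ S, (fun i => f (g i)) i ⁻¹' sets i)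
      = μ (⋂ j ∈ S, f (g j) ⁻¹' sets' (g j)) := by
        congr 1; apply Set.iInter₂_congr; intro j hj; rw [key j hj]
    _ = ∏ j ∈ S, μ (f (g j) ⁻¹' sets' (g j)) := this
    _ = ∏ i ∈ S, μ ((fun i => f (g i)) i ⁻¹' sets i) := by
        apply Finset.prod_congr rfl; intro j hj; rw [key j hj]

lemma xibar_cons {Ω : Type*} (ξ : List ℕ → ℕ → Ω → ℝ) (c : ℕ) (u : List ℕ) (ω : Ω) :
    xibar ξ (c :: u) ω = ξ [] c ω * xibar (shift c ξ) u ω := by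
  unfold xibar
  rw [List.length_cons, Finset.prod_range_succ']
  simp only [List.take_zero, List.getD_cons_zero, List.take_succ_cons, List.getD_cons_succ]
  rw [mul_comm]
  rfl

lemma xibar_nonneg {Ω : Type*} {ξ : List ℕ → ℕ → Ω → ℝ} {ω : Ω}
    (h : ∀ u i, 0 ≤ ξ u i ω) (u : List ℕ) : 0 ≤ xibar ξ u ω :=
  Finset.prod_nonneg fun _ _ => h _ _

lemma lmart_eq_ell {Ω : Type*} (β : ℝ) :
    ∀ (n : ℕ) (ξ : List ℕ → ℕ → Ω → ℝ) (ω : Ω), (∀ u i, 0 ≤ ξ u i ω) →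
      Lmart ξ β n ω = ell β n (En n (fun u i => ξ u i ω))
  | 0, ξ, ω, _ => by
      simp [Lmart, ell, xibar]
  | n+1, ξ, ω, h => by
      have key : ∀ (j : Fin 2) (w : Fin n → Fin 2),
          (xibar ξ (List.ofFn fun i => ((Fin.cons j w : Fin (n+1) → Fin 2) i : ℕ)) ω) ^ β
            = (ξ [] (j : ℕ) ω) ^ β *
              (xibar (shift (j : ℕ) ξ) (List.ofFn fun i => (w i : ℕ)) ω) ^ β := by
        intro j w
        rw [List.ofFn_succ]
        simp only [Fin.cons_zero, Fin.cons_succ]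
        rw [xibar_cons]
        exact Real.mul_rpow (h [] _) (xibar_nonneg (fun u i => h _ i) _)
      have hsum : Lmart ξ β (n+1) ω
          = ∑ jw : Fin 2 × (Fin n → Fin 2),
              (xibar ξ (List.ofFn fun i => ((Fin.cons jw.1 jw.2 : Fin (n+1) → Fin 2) i : ℕ)) ω) ^ β := by
        rw [Lmart]
        exact (Fintype.sum_equiv (Fin.consEquiv (fun _ : Fin (n+1) => Fin 2))
          (fun jw => (xibar ξ (List.ofFn fun i =>
            ((Fin.cons jw.1 jw.2 : Fin (n+1) → Fin 2) i : ℕ)) ω) ^ β)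
          (fun v => (xibar ξ (List.ofFn fun i => (v i : ℕ)) ω) ^ β)
          (fun jw => rfl)).symm
      rw [hsum, Fintype.sum_prod_type]
      simp only [key]
      rw [Fin.sum_univ_two]
      rw [← Finset.mul_sum, ← Finset.mul_sum]
      have h0 := lmart_eq_ell β n (shift 0 ξ) ω (fun u i => h _ i)
      have h1 := lmart_eq_ell β n (shift 1 ξ) ω (fun u i => h _ i)
      rw [Lmart] at h0 h1
      simp only [Fin.val_zero, Fin.val_one]
      rw [h0, h1]
      simp only [ell, En]
      rfl

lemma meas_ext {T : Finset (List ℕ)} :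
    Measurable (fun (h : T → (ℕ → ℝ)) (u : List ℕ) => if hu : u ∈ T then h ⟨u, hu⟩ else 0) :=
  measurable_pi_lambda _ fun u => by
    by_cases hu : u ∈ T
    · simp only [dif_pos hu]; exact measurable_pi_apply _
    · simp only [dif_neg hu]; exact measurable_const

lemma law_encode {Ω : Type*} [MeasurableSpace Ω] {P : Measure Ω} [IsProbabilityMeasure P]
    (μ0 : Measure (ℕ → ℝ)) :
    ∀ (n : ℕ) (ξ : List ℕ → ℕ → Ω → ℝ), (∀ u i, Measurable (ξ u i)) →
      iIndepFun (m := fun _ : List ℕ => (inferInstance : MeasurableSpace (ℕ → ℝ)))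
        (fun u ω i => ξ u i ω) P →
      (∀ u, P.map (fun ω i => ξ u i ω) = μ0) →
      P.map (fun ω => En n (fun u i => ξ u i ω)) = nu μ0 n
  | 0, ξ, hm, hi, hl => by
      rw [nu]
      have h1 : (fun ω : Ω => En 0 (fun u i => ξ u i ω)) = fun _ => () := rfl
      rw [h1]
      exact (Measure.map_const P (() : C 0)).trans (by rw [measure_univ, one_smul]; rfl)
  | n+1, ξ, hm, hi, hl => by
      classical
      have hmf : ∀ u : List ℕ, Measurable (fun ω i => ξ u i ω) :=
        fun u => measurable_pi_lambda _ (hm u)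
      set A : Ω → (ℕ → ℝ) := fun ω i => ξ [] i ω with hA
      set B : Ω → C n := fun ω => En n (fun u i => ξ (0 :: u) i ω) with hBdef
      set Cc : Ω → C n := fun ω => En n (fun u i => ξ (1 :: u) i ω) with hCdef
      have hmA : Measurable A := hmf []
      have hmB : Measurable B :=
        (measurable_En n).comp (measurable_pi_lambda _ fun u =>
          measurable_pi_lambda _ fun i => hm _ i)
      have hmC : Measurable Cc :=
        (measurable_En n).comp (measurable_pi_lambda _ fun u =>
          measurable_pi_lambda _ fun i => hm _ i)
      -- laws of B and C by induction
      have hB : P.map B = nu μ0 n :=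
        law_encode μ0 n (fun u => ξ (0 :: u)) (fun u i => hm _ i)
          (iIndepFun_precomp (fun u : List ℕ => 0 :: u)
            (fun a b h => by simpa using h) hi)
          (fun u => hl (0 :: u))
      have hC : P.map Cc = nu μ0 n :=
        law_encode μ0 n (fun u => ξ (1 :: u)) (fun u i => hm _ i)
          (iIndepFun_precomp (fun u : List ℕ => 1 :: u)
            (fun a b h => by simpa using h) hi)
          (fun u => hl (1 :: u))
      -- independence of B and C
      set S0 : Finset (List ℕ) := (WS n).image (0 :: ·) with hS0
      set S1 : Finset (List ℕ) := (WS n).image (1 :: ·) with hS1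
      have hd01 : Disjoint S0 S1 := by
        rw [Finset.disjoint_left]
        rintro a ha0 ha1
        rcases Finset.mem_image.1 ha0 with ⟨u, _, rfl⟩
        rcases Finset.mem_image.1 ha1 with ⟨v, _, h⟩
        exact absurd (List.head_eq_of_cons_eq h) (by norm_num)
      have h0S0 : ∀ u ∈ WS n, (0 :: u) ∈ S0 := fun u hu => Finset.mem_image_of_mem _ hu
      have h1S1 : ∀ u ∈ WS n, (1 :: u) ∈ S1 := fun u hu => Finset.mem_image_of_mem _ hu
      set φ0 : (S0 → (ℕ → ℝ)) → C n := fun h =>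
        En n (fun u => if hu : (0 :: u) ∈ S0 then h ⟨_, hu⟩ else 0) with hφ0
      set φ1 : (S1 → (ℕ → ℝ)) → C n := fun h =>
        En n (fun u => if hu : (1 :: u) ∈ S1 then h ⟨_, hu⟩ else 0) with hφ1
      have hmφ0 : Measurable φ0 :=
        (measurable_En n).comp (measurable_pi_lambda _ fun u =>
          (measurable_pi_apply (0 :: u)).comp meas_ext)
      have hmφ1 : Measurable φ1 :=
        (measurable_En n).comp (measurable_pi_lambda _ fun u =>
          (measurable_pi_apply (1 :: u)).comp meas_ext)
      have hBC : IndepFun B Cc P := by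
        have base := hi.indepFun_finset S0 S1 hd01 hmf
        have := base.comp hmφ0 hmφ1
        have e0 : (φ0 ∘ fun ω (u : S0) => (fun u' ω' i => ξ u' i ω') u ω) = B := by
          funext ω
          exact En_congr n (fun u hu => by simp only [dif_pos (h0S0 u hu)])
        have e1 : (φ1 ∘ fun ω (u : S1) => (fun u' ω' i => ξ u' i ω') u ω) = Cc := by
          funext ω
          exact En_congr n (fun u hu => by simp only [dif_pos (h1S1 u hu)])
        rwa [e0, e1] at this
      -- independence of A and (B, C)
      have hABC : IndepFun A (fun ω => (B ω, Cc ω)) P := by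
        have hdn : Disjoint ({[]} : Finset (List ℕ)) (S0 ∪ S1) := by
          rw [Finset.disjoint_left]
          rintro a ha han
          rw [Finset.mem_singleton] at ha
          subst ha
          rcases Finset.mem_union.1 han with h' | h' <;>
            · rcases Finset.mem_image.1 h' with ⟨u, _, h''⟩; exact List.cons_ne_nil _ _ h''
        set φA : (({[]} : Finset (List ℕ)) → (ℕ → ℝ)) → (ℕ → ℝ) := fun h =>
          h ⟨[], Finset.mem_singleton_self []⟩ with hφA
        set ψ : ((S0 ∪ S1 : Finset (List ℕ)) → (ℕ → ℝ)) → C n × C n := fun h =>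
          (En n (fun u => if hu : (0 :: u) ∈ S0 ∪ S1 then h ⟨_, hu⟩ else 0),
           En n (fun u => if hu : (1 :: u) ∈ S0 ∪ S1 then h ⟨_, hu⟩ else 0)) with hψ
        have hmφA : Measurable φA := measurable_pi_apply _
        have hmψ : Measurable ψ := by
          refine Measurable.prod ?_ ?_
          · exact (measurable_En n).comp (measurable_pi_lambda _ fun u =>
              (measurable_pi_apply ((0:ℕ) :: u)).comp meas_ext)
          · exact (measurable_En n).comp (measurable_pi_lambda _ fun u =>
              (measurable_pi_apply ((1:ℕ) :: u)).comp meas_ext)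
        have base := hi.indepFun_finset {[]} (S0 ∪ S1) hdn hmf
        have := base.comp hmφA hmψ
        have eA : (φA ∘ fun ω (u : ({[]} : Finset (List ℕ))) =>
            (fun u' ω' i => ξ u' i ω') u ω) = A := rfl
        have eBC : (ψ ∘ fun ω (u : (S0 ∪ S1 : Finset (List ℕ))) =>
            (fun u' ω' i => ξ u' i ω') u ω) = fun ω => (B ω, Cc ω) := by
          funext ω
          refine Prod.ext ?_ ?_
          · exact En_congr n (fun u hu => by
              simp only [dif_pos (Finset.mem_union_left _ (h0S0 u hu))])
          · exact En_congr n (fun u hu => by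
              simp only [dif_pos (Finset.mem_union_right _ (h1S1 u hu))])
        rwa [eA, eBC] at this
      -- assemble
      have hmBC : Measurable fun ω => (B ω, Cc ω) := hmB.prodMk hmC
      have step1 : P.map (fun ω => (A ω, B ω, Cc ω)) =
          (P.map A).prod (P.map fun ω => (B ω, Cc ω)) :=
        (indepFun_iff_map_prod_eq_prod_map_map hmA.aemeasurable hmBC.aemeasurable).mp hABC
      have step2 : P.map (fun ω => (B ω, Cc ω)) = (P.map B).prod (P.map Cc) :=
        (indepFun_iff_map_prod_eq_prod_map_map hmB.aemeasurable hmC.aemeasurable).mp hBC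
      have goal_eq : (fun ω => En (n+1) (fun u i => ξ u i ω)) =
          fun ω => (A ω, B ω, Cc ω) := rfl
      rw [nu, goal_eq]
      refine step1.trans ?_
      rw [step2, hB, hC, hl []]

section Anal

variable {μ0 : Measure (ℕ → ℝ)} [IsProbabilityMeasure μ0] {β : ℝ}

/-- pull back a.e. facts to a product -/
lemma ae_fst {α γ : Type*} [MeasurableSpace α] [MeasurableSpace γ] {μ : Measure α}
    {ρ : Measure γ} [SFinite μ] [SFinite ρ] {q : α → Prop} (h : ∀ᵐ x ∂μ, q x) :
    ∀ᵐ z ∂(μ.prod ρ), q z.1 :=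
  Measure.quasiMeasurePreserving_fst.tendsto_ae.eventually h

lemma ae_snd {α γ : Type*} [MeasurableSpace α] [MeasurableSpace γ] {μ : Measure α}
    {ρ : Measure γ} [SFinite μ] [SFinite ρ] {q : γ → Prop} (h : ∀ᵐ y ∂ρ, q y) :
    ∀ᵐ z ∂(μ.prod ρ), q z.2 :=
  Measure.quasiMeasurePreserving_snd.tendsto_ae.eventually h

lemma ell_nonneg (hβ : 0 < β) (h01 : ∀ᵐ x ∂μ0, 0 ≤ x 0 ∧ 0 ≤ x 1) :
    ∀ n, ∀ᵐ a ∂(nu μ0 n), 0 ≤ ell β n a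
  | 0 => by
      rw [nu]
      filter_upwards with a
      rw [ell]; norm_num
  | n+1 => by
      haveI := nu_prob μ0 n
      rw [nu]
      haveI : SFinite (nu μ0 n) := inferInstance
      filter_upwards [ae_fst (ρ := (nu μ0 n).prod (nu μ0 n)) h01,
        ae_snd (μ := μ0) (ae_fst (ρ := nu μ0 n) (ell_nonneg hβ h01 n)),
        ae_snd (μ := μ0) (ae_snd (μ := nu μ0 n) (ell_nonneg hβ h01 n))] with z h1 h2 h3
      rw [ell]
      exact add_nonneg (mul_nonneg (Real.rpow_nonneg h1.1 β) h2)
        (mul_nonneg (Real.rpow_nonneg h1.2 β) h3)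

/-- the pointwise binomial identity in `ℝ≥0∞` -/
lemma pointwise_binom {a b A B : ℝ} (ha : 0 ≤ a) (hb : 0 ≤ b) (hA : 0 ≤ A) (hB : 0 ≤ B)
    (p : ℕ) :
    ENNReal.ofReal ((a * A + b * B) ^ p) =
      ∑ j ∈ Finset.range (p + 1),
        ((p.choose j : ℝ≥0∞) * ENNReal.ofReal a ^ j * ENNReal.ofReal b ^ (p - j)) *
          (ENNReal.ofReal A ^ j * ENNReal.ofReal B ^ (p - j)) := by
  rw [add_pow]
  rw [ENNReal.ofReal_sum_of_nonneg (fun j _ => by positivity)]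
  refine Finset.sum_congr rfl fun j _ => ?_
  rw [mul_pow, mul_pow]
  rw [show a ^ j * A ^ j * (b ^ (p - j) * B ^ (p - j)) * (p.choose j : ℝ)
      = (p.choose j : ℝ) * a ^ j * b ^ (p - j) * (A ^ j * B ^ (p - j)) by ring]
  rw [ENNReal.ofReal_mul (by positivity), ENNReal.ofReal_mul (by positivity),
    ENNReal.ofReal_mul (by positivity), ENNReal.ofReal_mul (by positivity)]
  simp [ENNReal.ofReal_pow ha, ENNReal.ofReal_pow hb, ENNReal.ofReal_pow hA,
    ENNReal.ofReal_pow hB, ENNReal.ofReal_natCast]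


lemma meas_rpow_eval (i : ℕ) {q : ℝ} (hq : 0 ≤ q) :
    Measurable fun x : ℕ → ℝ => (x i) ^ q :=
  (measurable_rpowc hq).comp (measurable_pi_apply i)

lemma integrable_two_rpow {q : ℝ} (hq : 0 ≤ q)
    (h01 : ∀ᵐ x ∂μ0, (x 0 ∈ Set.Ico (0:ℝ) 1) ∧ (x 1 ∈ Set.Ico (0:ℝ) 1)) :
    Integrable (fun x => (x 0) ^ q + (x 1) ^ q) μ0 := by
  refine (integrable_const (2:ℝ)).mono'
    (((meas_rpow_eval 0 hq).add (meas_rpow_eval 1 hq)).aestronglyMeasurable) ?_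
  filter_upwards [h01] with x hx
  have h0 : (x 0) ^ q ≤ 1 := Real.rpow_le_one hx.1.1 hx.1.2.le hq
  have h1 : (x 1) ^ q ≤ 1 := Real.rpow_le_one hx.2.1 hx.2.2.le hq
  have h0' : 0 ≤ (x 0) ^ q := Real.rpow_nonneg hx.1.1 q
  have h1' : 0 ≤ (x 1) ^ q := Real.rpow_nonneg hx.2.1 q
  rw [Real.norm_eq_abs, abs_of_nonneg (by linarith)]
  linarith

lemma cint_nonneg {q : ℝ}
    (h01 : ∀ᵐ x ∂μ0, (x 0 ∈ Set.Ico (0:ℝ) 1) ∧ (x 1 ∈ Set.Ico (0:ℝ) 1)) :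
    0 ≤ ∫ x, ((x 0) ^ q + (x 1) ^ q) ∂μ0 := by
  refine integral_nonneg_of_ae ?_
  filter_upwards [h01] with x hx
  simp only [Pi.zero_apply]
  have h0' : 0 ≤ (x 0) ^ q := Real.rpow_nonneg hx.1.1 q
  have h1' : 0 ≤ (x 1) ^ q := Real.rpow_nonneg hx.2.1 q
  linarith

lemma cint_lt_one (hβ : 0 < β)
    (h01 : ∀ᵐ x ∂μ0, (x 0 ∈ Set.Ico (0:ℝ) 1) ∧ (x 1 ∈ Set.Ico (0:ℝ) 1))
    (hpos : ∀ᵐ x ∂μ0, 0 < x 0 ∧ 0 < x 1)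
    (hβ1 : ∫ x, ((x 0)^β + (x 1)^β) ∂μ0 = 1)
    {p : ℕ} (hp : 2 ≤ p) :
    ∫ x, ((x 0) ^ ((p:ℝ)*β) + (x 1) ^ ((p:ℝ)*β)) ∂μ0 < 1 := by
  have hq : (0:ℝ) ≤ (p:ℝ)*β := by positivity
  have hint1 := integrable_two_rpow hq h01
  have hint2 := integrable_two_rpow hβ.le h01
  have hlt : ∀ᵐ x ∂μ0, ((x 0) ^ ((p:ℝ)*β) + (x 1) ^ ((p:ℝ)*β)) < ((x 0)^β + (x 1)^β) := by
    filter_upwards [h01, hpos] with x hx hxp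
    have hβlt : β < (p:ℝ)*β := by
      nlinarith [hβ, show (2:ℝ) ≤ (p:ℝ) from by exact_mod_cast hp]
    exact add_lt_add (Real.rpow_lt_rpow_of_exponent_gt hxp.1 hx.1.2 hβlt)
      (Real.rpow_lt_rpow_of_exponent_gt hxp.2 hx.2.2 hβlt)
  set g := fun x : ℕ → ℝ => (x 0) ^ ((p:ℝ)*β) + (x 1) ^ ((p:ℝ)*β)
  set h := fun x : ℕ → ℝ => (x 0)^β + (x 1)^β
  have hpos' : 0 < ∫ x, (h x - g x) ∂μ0 := by
    rw [integral_pos_iff_support_of_nonneg_ae]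
    · have hsub : ∀ᵐ x ∂μ0, x ∈ Function.support (fun x => h x - g x) := by
        filter_upwards [hlt] with x hx
        simp only [Function.mem_support]
        intro hc
        have h2 : h x = g x := sub_eq_zero.1 hc
        simp only [h, g] at h2
        linarith
      have h1 : μ0 Set.univ ≤ μ0 (Function.support fun x => h x - g x)
          + μ0 {x | ¬ x ∈ Function.support fun x => h x - g x} := by
        refine le_trans (measure_mono ?_) (measure_union_le _ _)
        intro x _
        by_cases hx : x ∈ Function.support fun x => h x - g x
        · exact Set.mem_union_left _ hx
        · exact Set.mem_union_right _ hx
      have h2 : μ0 {x | ¬ x ∈ Function.support fun x => h x - g x} = 0 := hsub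
      rw [h2, add_zero, measure_univ] at h1
      exact lt_of_lt_of_le (by norm_num) h1
    · filter_upwards [hlt] with x hx
      simp only [Pi.zero_apply, h, g]
      linarith
    · exact hint2.sub hint1
  rw [integral_sub hint2 hint1, hβ1] at hpos'
  linarith

lemma f_ge_one (hβ : 0 < β)
    (h01 : ∀ᵐ x ∂μ0, (x 0 ∈ Set.Ico (0:ℝ) 1) ∧ (x 1 ∈ Set.Ico (0:ℝ) 1))
    (hpos : ∀ᵐ x ∂μ0, 0 < x 0 ∧ 0 < x 1)
    (hβ1 : ∫ x, ((x 0)^β + (x 1)^β) ∂μ0 = 1)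
    (f : ℕ → ℝ) (hf1 : f 1 = 1)
    (hfrec : ∀ p, 2 ≤ p → f p = (∑ j ∈ Finset.Ico 1 p, (p.choose j : ℝ) * f j * f (p - j)) /
        (1 - ∫ x, ((x 0) ^ ((p:ℝ)*β) + (x 1) ^ ((p:ℝ)*β)) ∂μ0)) :
    ∀ p, 1 ≤ p → (1:ℝ) ≤ f p := by
  intro p
  induction p using Nat.strong_induction_on with
  | _ p IH =>
    intro hp
    rcases eq_or_lt_of_le hp with h1 | h2
    · rw [← h1, hf1]
    · have hp2 : 2 ≤ p := h2
      have hc := cint_lt_one hβ h01 hpos hβ1 hp2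
      have hc0 := cint_nonneg (q := (p:ℝ)*β) h01
      set cp := ∫ x, ((x 0) ^ ((p:ℝ)*β) + (x 1) ^ ((p:ℝ)*β)) ∂μ0
      set S := ∑ j ∈ Finset.Ico 1 p, (p.choose j : ℝ) * f j * f (p - j) with hS
      have hterm : ∀ j ∈ Finset.Ico 1 p, (1:ℝ) ≤ f j ∧ (1:ℝ) ≤ f (p - j) := by
        intro j hj
        rw [Finset.mem_Ico] at hj
        constructor
        · exact IH j hj.2 hj.1
        · refine IH (p - j) ?_ ?_ <;> omega
      have htermpos : ∀ j ∈ Finset.Ico 1 p, (0:ℝ) ≤ (p.choose j : ℝ) * f j * f (p - j) := by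
        intro j hj
        exact mul_nonneg (mul_nonneg (Nat.cast_nonneg _)
          (by linarith [(hterm j hj).1])) (by linarith [(hterm j hj).2])
      have hSge : (2:ℝ) ≤ S := by
        have h1mem : 1 ∈ Finset.Ico 1 p := Finset.mem_Ico.2 ⟨le_refl _, h2⟩
        have hle : (p.choose 1 : ℝ) * f 1 * f (p - 1) ≤ S :=
          Finset.single_le_sum htermpos h1mem
        have hc1 : (p.choose 1 : ℝ) = p := by simp
        rw [hc1, hf1, mul_one] at hle
        have hfp1 : (1:ℝ) ≤ f (p - 1) := (hterm 1 h1mem).2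
        have hple : (2:ℝ) ≤ (p:ℝ) := by exact_mod_cast hp2
        nlinarith
      rw [hfrec p hp2]
      rw [le_div_iff₀ (by linarith)]
      linarith


lemma triple_factor {α γ1 γ2 : Type*} [MeasurableSpace α] [MeasurableSpace γ1]
    [MeasurableSpace γ2] {μ : Measure α} {ρ1 : Measure γ1} {ρ2 : Measure γ2}
    [SFinite μ] [SFinite ρ1] [SFinite ρ2]
    {F : α → ℝ≥0∞} {G : γ1 → ℝ≥0∞} {H : γ2 → ℝ≥0∞}
    (hF : Measurable F) (hG : Measurable G) (hH : Measurable H) :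
    ∫⁻ z, F z.1 * (G z.2.1 * H z.2.2) ∂(μ.prod (ρ1.prod ρ2)) =
      (∫⁻ x, F x ∂μ) * ((∫⁻ a, G a ∂ρ1) * (∫⁻ b, H b ∂ρ2)) := by
  have h1 : ∫⁻ z, F z.1 * ((fun y : γ1 × γ2 => G y.1 * H y.2) z.2) ∂(μ.prod (ρ1.prod ρ2)) =
      (∫⁻ x, F x ∂μ) * (∫⁻ y, G y.1 * H y.2 ∂(ρ1.prod ρ2)) :=
    lintegral_prod_mul hF.aemeasurable
      ((hG.comp measurable_fst).mul (hH.comp measurable_snd)).aemeasurable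
  rw [lintegral_prod_mul hG.aemeasurable hH.aemeasurable] at h1
  exact h1

lemma ell_moment (hβ : 0 < β)
    (h01 : ∀ᵐ x ∂μ0, (x 0 ∈ Set.Ico (0:ℝ) 1) ∧ (x 1 ∈ Set.Ico (0:ℝ) 1))
    (hpos : ∀ᵐ x ∂μ0, 0 < x 0 ∧ 0 < x 1)
    (hβ1 : ∫ x, ((x 0)^β + (x 1)^β) ∂μ0 = 1)
    (f : ℕ → ℝ) (hf1 : f 1 = 1)
    (hfrec : ∀ p, 2 ≤ p → f p = (∑ j ∈ Finset.Ico 1 p, (p.choose j : ℝ) * f j * f (p - j)) /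
        (1 - ∫ x, ((x 0) ^ ((p:ℝ)*β) + (x 1) ^ ((p:ℝ)*β)) ∂μ0)) :
    ∀ p, 1 ≤ p → ∀ n,
      ∫⁻ a, ENNReal.ofReal ((ell β n a)^p) ∂(nu μ0 n) ≤ ENNReal.ofReal (f p) := by
  have h00 : ∀ᵐ x ∂μ0, 0 ≤ x 0 ∧ 0 ≤ x 1 := by
    filter_upwards [h01] with x hx; exact ⟨hx.1.1, hx.2.1⟩
  have hfone := f_ge_one hβ h01 hpos hβ1 f hf1 hfrec
  intro p
  induction p using Nat.strong_induction_on with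
  | _ p IH =>
  intro hp n
  induction n with
  | zero =>
      haveI := nu_prob μ0 0
      have hz : ∀ a : C 0, ENNReal.ofReal (ell β 0 a ^ p) = 1 := fun a => by
        rw [show ell β 0 a = 1 from rfl, one_pow, ENNReal.ofReal_one]
      simp only [hz, lintegral_const, measure_univ, one_mul]
      rw [← ENNReal.ofReal_one]
      exact ENNReal.ofReal_le_ofReal (hfone p hp)
  | succ n IHn =>
      haveI := nu_prob μ0 n
      have hellm := measurable_ell hβ.le n
      -- abbreviations
      set ρ := nu μ0 n with hρ
      set G0 : (ℕ → ℝ) → ℝ≥0∞ := fun x => ENNReal.ofReal ((x 0) ^ β) with hG0def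
      set G1 : (ℕ → ℝ) → ℝ≥0∞ := fun x => ENNReal.ofReal ((x 1) ^ β) with hG1def
      set H : C n → ℝ≥0∞ := fun a => ENNReal.ofReal (ell β n a) with hHdef
      have hmG0 : Measurable G0 := (meas_rpow_eval 0 hβ.le).ennreal_ofReal
      have hmG1 : Measurable G1 := (meas_rpow_eval 1 hβ.le).ennreal_ofReal
      have hmH : Measurable H := hellm.ennreal_ofReal
      -- reduce to the product space (definitional unfolding of `nu`, `ell`, `C`)
      suffices hS : ∫⁻ z : (ℕ → ℝ) × C n × C n,
          ENNReal.ofReal (((z.1 0) ^ β * ell β n z.2.1 + (z.1 1) ^ β * ell β n z.2.2) ^ p)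
            ∂(μ0.prod (ρ.prod ρ)) ≤ ENNReal.ofReal (f p) by exact hS
      -- step 1 : a.e. binomial expansion
      have hae : ∀ᵐ z ∂(μ0.prod (ρ.prod ρ)),
          ENNReal.ofReal (((z.1 0) ^ β * ell β n z.2.1 + (z.1 1) ^ β * ell β n z.2.2) ^ p) =
          ∑ j ∈ Finset.range (p + 1),
            (fun x => (p.choose j : ℝ≥0∞) * G0 x ^ j * G1 x ^ (p - j)) z.1 *
              ((fun a => H a ^ j) z.2.1 * (fun b => H b ^ (p - j)) z.2.2) := by
        filter_upwards [ae_fst (ρ := ρ.prod ρ) h01,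
          ae_snd (μ := μ0) (ae_fst (ρ := ρ) (ell_nonneg hβ h00 n)),
          ae_snd (μ := μ0) (ae_snd (μ := ρ) (ell_nonneg hβ h00 n))] with z h1 h2 h3
        rw [pointwise_binom (Real.rpow_nonneg h1.1.1 β) (Real.rpow_nonneg h1.2.1 β) h2 h3 p]
      rw [lintegral_congr_ae hae]
      -- step 2 : interchange sum and integral, factor the product
      have hmterm : ∀ j, Measurable fun z : (ℕ → ℝ) × C n × C n =>
          (fun x => (p.choose j : ℝ≥0∞) * G0 x ^ j * G1 x ^ (p - j)) z.1 *
            ((fun a => H a ^ j) z.2.1 * (fun b => H b ^ (p - j)) z.2.2) := by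
        intro j
        fun_prop
      rw [lintegral_finset_sum _ (fun j _ => hmterm j)]
      have hfac : ∀ j, (∫⁻ z, (fun x => (p.choose j : ℝ≥0∞) * G0 x ^ j * G1 x ^ (p - j)) z.1 *
            ((fun a => H a ^ j) z.2.1 * (fun b => H b ^ (p - j)) z.2.2) ∂(μ0.prod (ρ.prod ρ)))
          = (∫⁻ x, (p.choose j : ℝ≥0∞) * G0 x ^ j * G1 x ^ (p - j) ∂μ0) *
            ((∫⁻ a, H a ^ j ∂ρ) * (∫⁻ b, H b ^ (p - j) ∂ρ)) := fun j =>
        triple_factor ((measurable_const.mul (hmG0.pow_const j)).mul (hmG1.pow_const (p - j)))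
          (hmH.pow_const j) (hmH.pow_const (p - j))
      simp only [hfac]
      -- notation for the one-dimensional integrals
      set V : ℕ → ℝ≥0∞ := fun j => ∫⁻ a, H a ^ j ∂ρ with hV
      -- V j = moment of order j
      have hVeq : ∀ j, V j = ∫⁻ a, ENNReal.ofReal ((ell β n a)^j) ∂ρ := by
        intro j
        refine lintegral_congr_ae ?_
        filter_upwards [ell_nonneg hβ h00 n] with a ha
        rw [hHdef, ENNReal.ofReal_pow ha]
      have hV0 : V 0 = 1 := by
        rw [hV]
        simp only [pow_zero]
        simp
      set U : ℕ → ℝ≥0∞ := fun j =>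
        ∫⁻ x, (p.choose j : ℝ≥0∞) * G0 x ^ j * G1 x ^ (p - j) ∂μ0 with hU
      set q : ℝ := (p:ℝ) * β with hqdef
      have hq : 0 ≤ q := by positivity
      -- moments of V
      have hVle : ∀ j, 1 ≤ j → j < p → V j ≤ ENNReal.ofReal (f j) := fun j h1 h2 =>
        (hVeq j).trans_le (IH j h2 h1 n)
      have hVp : V p ≤ ENNReal.ofReal (f p) := (hVeq p).trans_le IHn
      -- edge integrals
      have hG0pow : ∀ᵐ x ∂μ0, G0 x ^ p = ENNReal.ofReal ((x 0) ^ q) := by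
        filter_upwards [h00] with x hx
        rw [hG0def, ← ENNReal.ofReal_pow (Real.rpow_nonneg hx.1 β),
          ← Real.rpow_natCast ((x 0) ^ β) p, ← Real.rpow_mul hx.1, hqdef, mul_comm]
      have hG1pow : ∀ᵐ x ∂μ0, G1 x ^ p = ENNReal.ofReal ((x 1) ^ q) := by
        filter_upwards [h00] with x hx
        rw [hG1def, ← ENNReal.ofReal_pow (Real.rpow_nonneg hx.2 β),
          ← Real.rpow_natCast ((x 1) ^ β) p, ← Real.rpow_mul hx.2, hqdef, mul_comm]
      have hUp : U p = ∫⁻ x, ENNReal.ofReal ((x 0) ^ q) ∂μ0 := by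
        rw [hU]
        refine lintegral_congr_ae ?_
        filter_upwards [hG0pow] with x hx
        rw [Nat.choose_self, Nat.sub_self, pow_zero, Nat.cast_one, one_mul, mul_one, hx]
      have hU0 : U 0 = ∫⁻ x, ENNReal.ofReal ((x 1) ^ q) ∂μ0 := by
        rw [hU]
        refine lintegral_congr_ae ?_
        filter_upwards [hG1pow] with x hx
        rw [Nat.choose_zero_right, pow_zero, Nat.cast_one, one_mul, one_mul, Nat.sub_zero, hx]
      set cp : ℝ := ∫ x, ((x 0) ^ q + (x 1) ^ q) ∂μ0 with hcp
      have hcpsum : U p + U 0 = ENNReal.ofReal cp := by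
        rw [hUp, hU0,
          ← lintegral_add_left ((meas_rpow_eval 0 hq).ennreal_ofReal) _]
        have h1 : ∫⁻ x, (ENNReal.ofReal ((x 0) ^ q) + ENNReal.ofReal ((x 1) ^ q)) ∂μ0
            = ∫⁻ x, ENNReal.ofReal ((x 0) ^ q + (x 1) ^ q) ∂μ0 := by
          refine lintegral_congr_ae ?_
          filter_upwards [h00] with x hx
          rw [ENNReal.ofReal_add (Real.rpow_nonneg hx.1 q) (Real.rpow_nonneg hx.2 q)]
        rw [h1, ← ofReal_integral_eq_lintegral_ofReal (integrable_two_rpow hq h01) ?_]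
        filter_upwards [h00] with x hx
        simp only [Pi.zero_apply]
        have := Real.rpow_nonneg hx.1 q
        have := Real.rpow_nonneg hx.2 q
        linarith
      -- middle bound
      have hUmid : ∀ j, U j ≤ (p.choose j : ℝ≥0∞) := by
        intro j
        rw [hU]
        have hb : ∀ᵐ x ∂μ0, (p.choose j : ℝ≥0∞) * G0 x ^ j * G1 x ^ (p - j)
            ≤ (p.choose j : ℝ≥0∞) := by
          filter_upwards [h01] with x hx
          have hg0 : G0 x ≤ 1 := ENNReal.ofReal_le_one.2
            (Real.rpow_le_one hx.1.1 hx.1.2.le hβ.le)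
          have hg1 : G1 x ≤ 1 := ENNReal.ofReal_le_one.2
            (Real.rpow_le_one hx.2.1 hx.2.2.le hβ.le)
          calc (p.choose j : ℝ≥0∞) * G0 x ^ j * G1 x ^ (p - j)
              ≤ (p.choose j : ℝ≥0∞) * 1 ^ j * 1 ^ (p - j) := by gcongr
            _ = (p.choose j : ℝ≥0∞) := by simp
        calc ∫⁻ x, (p.choose j : ℝ≥0∞) * G0 x ^ j * G1 x ^ (p - j) ∂μ0
            ≤ ∫⁻ _, (p.choose j : ℝ≥0∞) ∂μ0 := lintegral_mono_ae hb
          _ = (p.choose j : ℝ≥0∞) := by simp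
      -- the real-number sum
      set S : ℝ := ∑ j ∈ Finset.Ico 1 p, (p.choose j : ℝ) * f j * f (p - j) with hSdef
      have hfj : ∀ j ∈ Finset.Ico 1 p, (1:ℝ) ≤ f j ∧ (1:ℝ) ≤ f (p - j) := by
        intro j hj
        rw [Finset.mem_Ico] at hj
        exact ⟨hfone j hj.1, hfone (p - j) (by omega)⟩
      have hSnonneg : 0 ≤ S := by
        rw [hSdef]
        refine Finset.sum_nonneg fun j hj => ?_
        exact mul_nonneg (mul_nonneg (Nat.cast_nonneg _)
          (by linarith [(hfj j hj).1])) (by linarith [(hfj j hj).2])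
      have hmid : (∑ j ∈ Finset.Ico 1 p, U j * (V j * V (p - j))) ≤ ENNReal.ofReal S := by
        have : (∑ j ∈ Finset.Ico 1 p, U j * (V j * V (p - j)))
            ≤ ∑ j ∈ Finset.Ico 1 p,
              (p.choose j : ℝ≥0∞) * (ENNReal.ofReal (f j) * ENNReal.ofReal (f (p - j))) := by
          refine Finset.sum_le_sum fun j hj => ?_
          have hj' := Finset.mem_Ico.1 hj
          exact mul_le_mul' (hUmid j) (mul_le_mul' (hVle j hj'.1 hj'.2)
            (hVle (p - j) (by omega) (by omega)))
        refine this.trans (le_of_eq ?_)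
        rw [hSdef, ENNReal.ofReal_sum_of_nonneg]
        · refine Finset.sum_congr rfl fun j hj => ?_
          rw [ENNReal.ofReal_mul (mul_nonneg (Nat.cast_nonneg _)
              (by linarith [(hfj j hj).1])),
            ENNReal.ofReal_mul (Nat.cast_nonneg _), ENNReal.ofReal_natCast, mul_assoc]
        · intro j hj
          exact mul_nonneg (mul_nonneg (Nat.cast_nonneg _)
            (by linarith [(hfj j hj).1])) (by linarith [(hfj j hj).2])
      -- split the sum
      have hsplit : (∑ j ∈ Finset.range (p + 1), U j * (V j * V (p - j)))
          = (U 0 * (V 0 * V p) + ∑ j ∈ Finset.Ico 1 p, U j * (V j * V (p - j)))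
            + U p * (V p * V (p - p)) := by
        rw [Finset.sum_range_succ, Finset.range_eq_Ico,
          Finset.sum_eq_sum_Ico_succ_bot (by omega : 0 < p)]
        simp
      rw [hsplit]
      have hcp0 : 0 ≤ cp := cint_nonneg h01
      have hfp0 : (0:ℝ) ≤ f p := by linarith [hfone p hp]
      -- final arithmetic
      have harith : S + cp * f p ≤ f p := by
        rcases eq_or_lt_of_le hp with h1 | h2
        · have hp1 : p = 1 := h1.symm
          subst hp1
          have hS0 : S = 0 := by rw [hSdef]; simp
          have hcp1 : cp = 1 := by
            rw [hcp, hqdef]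
            simpa using hβ1
          rw [hS0, hcp1, hf1]
          norm_num
        · have hp2 : 2 ≤ p := h2
          have hclt : cp < 1 := by
            rw [hcp, hqdef]
            exact cint_lt_one hβ h01 hpos hβ1 hp2
          have hfp : f p = S / (1 - cp) := by
            rw [hfrec p hp2, hSdef, hcp, hqdef]
          have hSeq : f p * (1 - cp) = S := by
            rw [hfp, div_mul_cancel₀ _ (ne_of_gt (by linarith : (0:ℝ) < 1 - cp))]
          nlinarith [hSeq]
      calc (U 0 * (V 0 * V p) + ∑ j ∈ Finset.Ico 1 p, U j * (V j * V (p - j)))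
            + U p * (V p * V (p - p))
          ≤ (U 0 * (1 * ENNReal.ofReal (f p)) + ENNReal.ofReal S)
            + U p * (ENNReal.ofReal (f p) * 1) := by
            rw [Nat.sub_self, hV0]
            exact add_le_add (add_le_add (mul_le_mul' le_rfl
              (mul_le_mul' le_rfl hVp)) hmid) (mul_le_mul' le_rfl (mul_le_mul' hVp le_rfl))
        _ = ENNReal.ofReal S + (U p + U 0) * ENNReal.ofReal (f p) := by ring
        _ = ENNReal.ofReal S + ENNReal.ofReal cp * ENNReal.ofReal (f p) := by rw [hcpsum]
        _ = ENNReal.ofReal (S + cp * f p) := by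
            rw [← ENNReal.ofReal_mul hcp0, ← ENNReal.ofReal_add hSnonneg
              (mul_nonneg hcp0 hfp0)]
        _ ≤ ENNReal.ofReal (f p) := ENNReal.ofReal_le_ofReal harith

end Anal

end Stmt3Aux

open Stmt3Aux in
/-- In the setting of the martingale `L_n = Σ_{u∈{0,1}^n} ξ̄_u^β`, for every
integer `p ≥ 1`, `sup_{n≥0} E[L_n^p] < ∞`; in fact `E[L_n^p] ≤ f p` for all `n`, where
`f 1 = 1` and recursively
`f p = (Σ_{j=1}^{p-1} C(p,j) f j f (p-j)) / (1 - E[ξ_0^{pβ} + ξ_1^{pβ}])` for `p ≥ 2`. -/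
theorem stmt3 {Ω : Type*} [m0 : MeasurableSpace Ω] {P : Measure Ω} [IsProbabilityMeasure P]
    (ξ : List ℕ → ℕ → Ω → ℝ)
    (hmeas : ∀ u i, Measurable (ξ u i))
    (hindep : iIndepFun (m := fun _ : List ℕ => (inferInstance : MeasurableSpace (ℕ → ℝ)))
      (fun u ω i => ξ u i ω) P)
    (hident : ∀ u : List ℕ, IdentDistrib (fun ω i => ξ u i ω) (fun ω i => ξ [] i ω) P P)
    (hval : ∀ u : List ℕ, ∀ᵐ ω ∂P,
      (∀ i, ξ u i ω ∈ Set.Ico (0 : ℝ) 1) ∧ (∑' i, ξ u i ω) = 1)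
    (hpos : ∀ᵐ ω ∂P, 0 < ξ [] 0 ω ∧ 0 < ξ [] 1 ω)
    (β : ℝ) (hβ : β ∈ Set.Ioc (0 : ℝ) 1)
    (hβ1 : ∫ ω, ((ξ [] 0 ω) ^ β + (ξ [] 1 ω) ^ β) ∂P = 1)
    (f : ℕ → ℝ) (hf1 : f 1 = 1)
    (hfrec : ∀ p : ℕ, 2 ≤ p →
      f p = (∑ j ∈ Finset.Ico 1 p, (p.choose j : ℝ) * f j * f (p - j)) /
        (1 - ∫ ω, ((ξ [] 0 ω) ^ ((p : ℝ) * β) + (ξ [] 1 ω) ^ ((p : ℝ) * β)) ∂P)) :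
    ∀ p : ℕ, 1 ≤ p → ∀ n : ℕ,
      ∫⁻ ω, ENNReal.ofReal ((Lmart ξ β n ω) ^ p) ∂P ≤ ENNReal.ofReal (f p) := by
  classical
  have hβpos : 0 < β := hβ.1
  set μ0 : Measure (ℕ → ℝ) := P.map (fun ω i => ξ [] i ω) with hμ0
  have hmf : ∀ u : List ℕ, Measurable (fun ω i => ξ u i ω) :=
    fun u => measurable_pi_lambda _ (hmeas u)
  haveI : IsProbabilityMeasure μ0 := Measure.isProbabilityMeasure_map (hmf []).aemeasurable
  have hlaw : ∀ u, P.map (fun ω i => ξ u i ω) = μ0 := fun u => (hident u).map_eq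
  -- transfer of integrals from `P` to `μ0`
  have hmove : ∀ q : ℝ, 0 ≤ q →
      ∫ x, ((x 0) ^ q + (x 1) ^ q) ∂μ0 = ∫ ω, ((ξ [] 0 ω) ^ q + (ξ [] 1 ω) ^ q) ∂P := by
    intro q hq
    rw [hμ0, integral_map (hmf []).aemeasurable (f := fun x : ℕ → ℝ => (x 0) ^ q + (x 1) ^ q)
      (((meas_rpow_eval 0 hq).add (meas_rpow_eval 1 hq)).aestronglyMeasurable)]
  have hβ1' : ∫ x, ((x 0) ^ β + (x 1) ^ β) ∂μ0 = 1 := by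
    rw [hmove β hβpos.le]; exact hβ1
  have hfrec' : ∀ p : ℕ, 2 ≤ p →
      f p = (∑ j ∈ Finset.Ico 1 p, (p.choose j : ℝ) * f j * f (p - j)) /
        (1 - ∫ x, ((x 0) ^ ((p:ℝ) * β) + (x 1) ^ ((p:ℝ) * β)) ∂μ0) := by
    intro p hp
    rw [hmove ((p:ℝ) * β) (by positivity)]
    exact hfrec p hp
  -- transfer of a.e. statements
  have h01' : ∀ᵐ x ∂μ0, (x 0 ∈ Set.Ico (0:ℝ) 1) ∧ (x 1 ∈ Set.Ico (0:ℝ) 1) := by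
    rw [hμ0, ae_map_iff (hmf []).aemeasurable]
    · filter_upwards [hval []] with ω hω
      exact ⟨hω.1 0, hω.1 1⟩
    · exact MeasurableSet.inter
        ((measurable_pi_apply 0) measurableSet_Ico)
        ((measurable_pi_apply 1) measurableSet_Ico)
  have hpos' : ∀ᵐ x ∂μ0, 0 < x 0 ∧ 0 < x 1 := by
    rw [hμ0, ae_map_iff (hmf []).aemeasurable]
    · exact hpos
    · exact MeasurableSet.inter
        (measurableSet_lt measurable_const (measurable_pi_apply 0))
        (measurableSet_lt measurable_const (measurable_pi_apply 1))
  intro p hp n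
  -- a.e. nonnegativity of all the coordinates
  have haeg : ∀ᵐ ω ∂P, ∀ u : List ℕ, ∀ i, 0 ≤ ξ u i ω := by
    rw [ae_all_iff]
    intro u
    filter_upwards [hval u] with ω hω i
    exact (hω.1 i).1
  have hcongr : ∀ᵐ ω ∂P, ENNReal.ofReal ((Lmart ξ β n ω) ^ p)
      = ENNReal.ofReal ((ell β n (En n (fun u i => ξ u i ω))) ^ p) := by
    filter_upwards [haeg] with ω hω
    rw [lmart_eq_ell β n ξ ω hω]
  rw [lintegral_congr_ae hcongr]
  have hEn : Measurable (fun ω => En n (fun u i => ξ u i ω)) :=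
    (measurable_En n).comp (measurable_pi_lambda _ fun u => hmf u)
  have hgm : Measurable fun c => ENNReal.ofReal ((ell β n c) ^ p) :=
    ((measurable_ell hβpos.le n).pow_const p).ennreal_ofReal
  rw [← lintegral_map hgm hEn, law_encode μ0 n ξ hmeas hindep hlaw]
  exact ell_moment hβpos h01' hpos' hβ1' f hf1 hfrec' p hp n
end
end

section
/- Let ((ξ_{u,i})_{i≥0})_{u∈𝕌} be an i.i.d. family of random sequences with values in the set of sequences (x_i)_{i≥0} with x_i ∈ [0,1) for all i and Σ_{i≥0} x_i = 1, let β ∈ (0,1], and let (Y_u)_{u∈𝕌} be an i.i.d. family of non-negative square-integrable random variables, independent of the family ((ξ_{u,i})_{i≥0})_{u∈𝕌}. Set m := E[Y_∅], L_n := Σ_{u∈{0,1}^n} ξ̄_u^β and L̃_n := Σ_{u∈{0,1}^n} ξ̄_u^β Y_u. Then for every n ≥ 0, E[(L̃_n − m·L_n)^2] = Var(Y_∅) · (E[ξ_0^{2β} + ξ_1^{2β}])^n. -/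
open MeasureTheory ProbabilityTheory Filter
open scoped ENNReal Topology

noncomputable section

/-- `L̃_n = Σ_{u ∈ {0,1}^n} ξ̄_u^β Y_u`. -/
def Ltilde {Ω : Type*} (ξ : List ℕ → ℕ → Ω → ℝ) (Y : List ℕ → Ω → ℝ) (β : ℝ)
    (n : ℕ) (ω : Ω) : ℝ :=
  ∑ v : Fin n → Fin 2,
    (xibar ξ (List.ofFn fun i => (v i : ℕ)) ω) ^ β * Y (List.ofFn fun i => (v i : ℕ)) ω

private lemma sum_prod_pow (n : ℕ) (c : Fin 2 → ℝ) :
    ∑ v : Fin n → Fin 2, ∏ k : Fin n, c (v k) = (c 0 + c 1) ^ n := by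
  classical
  have h := Finset.prod_univ_sum (fun _ : Fin n => (Finset.univ : Finset (Fin 2)))
    (fun _ j => c j)
  simp only [Fintype.piFinset_univ] at h
  rw [← h]
  simp [Fin.sum_univ_two]

private lemma path_integral {Ω : Type*} [m0 : MeasurableSpace Ω] {P : Measure Ω}
    [IsProbabilityMeasure P]
    (ξ : List ℕ → ℕ → Ω → ℝ) (hmeas : ∀ u i, Measurable (ξ u i))
    (hindep : iIndepFun (m := fun _ : List ℕ => (inferInstance : MeasurableSpace (ℕ → ℝ)))
      (fun u ω i => ξ u i ω) P)
    (hident : ∀ u : List ℕ, IdentDistrib (fun ω i => ξ u i ω) (fun ω i => ξ [] i ω) P P)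
    (b : ℝ) (hb : 0 ≤ b) (w : List ℕ) :
    ∫ ω, ∏ k ∈ Finset.range w.length, (ξ (w.take k) (w.getD k 0) ω) ^ b ∂P
      = ∏ k ∈ Finset.range w.length, ∫ ω, (ξ [] (w.getD k 0) ω) ^ b ∂P := by
  classical
  have hrpow : Measurable fun x : ℝ => x ^ b := (Real.continuous_rpow_const hb).measurable
  set F : List ℕ → Ω → ℝ := fun u ω => (ξ u (w.getD u.length 0) ω) ^ b with hF
  have hFmeas : ∀ u, Measurable (F u) := fun u => hrpow.comp (hmeas u _)
  have hFindep : iIndepFun (m := fun _ : List ℕ => (inferInstance : MeasurableSpace ℝ)) F P := by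
    exact hindep.comp (fun u (x : ℕ → ℝ) => (x (w.getD u.length 0)) ^ b)
      (fun u => hrpow.comp (measurable_pi_apply _))
  have htake : ∀ k, k ≤ w.length → (w.take k).length = k := fun k hk => by
    simp [List.length_take, hk]
  have hFval : ∀ k, k ≤ w.length → F (w.take k) = fun ω => (ξ (w.take k) (w.getD k 0) ω) ^ b := by
    intro k hk
    rw [hF]
    simp only [htake k hk]
  have hFint : ∀ k, k ≤ w.length →
      ∫ ω, F (w.take k) ω ∂P = ∫ ω, (ξ [] (w.getD k 0) ω) ^ b ∂P := by
    intro k hk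
    rw [hFval k hk]
    exact ((hident (w.take k)).comp (hrpow.comp (measurable_pi_apply (w.getD k 0)))).integral_eq
  have key : ∀ l, l ≤ w.length →
      ∫ ω, ∏ k ∈ Finset.range l, F (w.take k) ω ∂P
        = ∏ k ∈ Finset.range l, ∫ ω, F (w.take k) ω ∂P := by
    intro l
    induction l with
    | zero => intro _; simp
    | succ l ih =>
      intro hl
      have hl' : l < w.length := Nat.lt_of_succ_le hl
      have hnotmem : w.take l ∉ (Finset.range l).image (fun k => w.take k) := by
        intro hmem
        obtain ⟨k, hk, hkeq⟩ := Finset.mem_image.1 hmem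
        have hlen := congrArg List.length hkeq
        rw [htake k (le_of_lt (lt_of_lt_of_le (Finset.mem_range.1 hk) hl'.le)),
          htake l hl'.le] at hlen
        exact (Finset.mem_range.1 hk).ne hlen
      have hindepProd : IndepFun (∏ j ∈ (Finset.range l).image (fun k => w.take k), F j)
          (F (w.take l)) P :=
        hFindep.indepFun_finsetProd_of_notMem hFmeas hnotmem
      have hprodeq : (∏ j ∈ (Finset.range l).image (fun k => w.take k), F j)
          = fun ω => ∏ k ∈ Finset.range l, F (w.take k) ω := by
        rw [Finset.prod_image]
        · funext ω; simp [Finset.prod_apply]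
        · intro a ha b hb hab
          have hlen := congrArg List.length hab
          rw [htake a (le_of_lt (lt_of_lt_of_le (Finset.mem_range.1 ha) hl'.le)),
            htake b (le_of_lt (lt_of_lt_of_le (Finset.mem_range.1 hb) hl'.le))] at hlen
          exact hlen
      rw [hprodeq] at hindepProd
      have hmul := hindepProd.integral_fun_mul_eq_mul_integral
        ((Finset.measurable_prod (Finset.range l) fun k _ => hFmeas (w.take k)).aestronglyMeasurable)
        ((hFmeas (w.take l)).aestronglyMeasurable)
      have h1 : ∫ ω, ∏ k ∈ Finset.range (l+1), F (w.take k) ω ∂P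
          = (∫ ω, ∏ k ∈ Finset.range l, F (w.take k) ω ∂P) * ∫ ω, F (w.take l) ω ∂P := by
        simp only [Finset.prod_range_succ]
        exact hmul
      rw [h1, ih (le_of_lt hl'), Finset.prod_range_succ]
  have hfinal := key w.length le_rfl
  calc ∫ ω, ∏ k ∈ Finset.range w.length, (ξ (w.take k) (w.getD k 0) ω) ^ b ∂P
      = ∫ ω, ∏ k ∈ Finset.range w.length, F (w.take k) ω ∂P := by
        refine integral_congr_ae (ae_of_all _ fun ω => ?_)
        refine Finset.prod_congr rfl fun k hk => ?_
        rw [hFval k (le_of_lt (Finset.mem_range.1 hk))]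
    _ = ∏ k ∈ Finset.range w.length, ∫ ω, F (w.take k) ω ∂P := hfinal
    _ = ∏ k ∈ Finset.range w.length, ∫ ω, (ξ [] (w.getD k 0) ω) ^ b ∂P :=
        Finset.prod_congr rfl fun k hk => hFint k (le_of_lt (Finset.mem_range.1 hk))


/-- With `(Y_u)_{u∈𝕌}` an i.i.d. family of non-negative square-integrable
random variables independent of the i.i.d. family `(ξ_{u,·})_{u∈𝕌}`, `m = E[Y_∅]`,
`L_n = Σ_{u∈{0,1}^n} ξ̄_u^β` and `L̃_n = Σ_{u∈{0,1}^n} ξ̄_u^β Y_u`, one has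
`E[(L̃_n - m L_n)^2] = Var(Y_∅) · (E[ξ_0^{2β} + ξ_1^{2β}])^n` for every `n ≥ 0`. -/
theorem stmt5 {Ω : Type*} [m0 : MeasurableSpace Ω] {P : Measure Ω} [IsProbabilityMeasure P]
    (ξ : List ℕ → ℕ → Ω → ℝ)
    (hmeas : ∀ u i, Measurable (ξ u i))
    (hindep : iIndepFun (m := fun _ : List ℕ => (inferInstance : MeasurableSpace (ℕ → ℝ)))
      (fun u ω i => ξ u i ω) P)
    (hident : ∀ u : List ℕ, IdentDistrib (fun ω i => ξ u i ω) (fun ω i => ξ [] i ω) P P)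
    (hval : ∀ u : List ℕ, ∀ᵐ ω ∂P,
      (∀ i, ξ u i ω ∈ Set.Ico (0 : ℝ) 1) ∧ (∑' i, ξ u i ω) = 1)
    (β : ℝ) (hβ : β ∈ Set.Ioc (0 : ℝ) 1)
    (Y : List ℕ → Ω → ℝ)
    (hYmeas : ∀ u, Measurable (Y u))
    (hYindep : iIndepFun (m := fun _ : List ℕ => (inferInstance : MeasurableSpace ℝ)) Y P)
    (hYident : ∀ u : List ℕ, IdentDistrib (Y u) (Y []) P P)
    (hYnonneg : ∀ u, ∀ᵐ ω ∂P, 0 ≤ Y u ω)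
    (hYL2 : MemLp (Y []) 2 P)
    (hYξindep : IndepFun (fun ω => fun u : List ℕ => Y u ω)
      (fun ω => fun p : List ℕ × ℕ => ξ p.1 p.2 ω) P) :
    ∀ n : ℕ,
      ∫ ω, (Ltilde ξ Y β n ω - (∫ ω', Y [] ω' ∂P) * Lmart ξ β n ω) ^ 2 ∂P
        = variance (Y []) P
            * (∫ ω, ((ξ [] 0 ω) ^ (2 * β) + (ξ [] 1 ω) ^ (2 * β)) ∂P) ^ n := by
  classical
  intro n
  set m := ∫ ω', Y [] ω' ∂P with hm
  set W : (Fin n → Fin 2) → List ℕ := fun v => List.ofFn fun i => (v i : ℕ) with hW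
  have hWlen : ∀ v, (W v).length = n := fun v => by simp [hW]
  have hWinj : Function.Injective W := by
    intro u v h
    have h2 := List.ofFn_injective h
    funext i
    exact Fin.val_injective (congrFun h2 i)
  set A : (Fin n → Fin 2) → Ω → ℝ := fun v ω => (xibar ξ (W v) ω) ^ β with hA
  set B : (Fin n → Fin 2) → Ω → ℝ := fun v ω => Y (W v) ω - m with hB
  have hb2 : (0:ℝ) ≤ 2 * β := by linarith [hβ.1]
  have hrpow : Measurable fun x : ℝ => x ^ β := (Real.continuous_rpow_const hβ.1.le).measurable
  have hrpow2 : Measurable fun x : ℝ => x ^ (2*β) := (Real.continuous_rpow_const hb2).measurable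
  have hxibar_meas : ∀ v, Measurable fun ω => xibar ξ (W v) ω := fun v =>
    Finset.measurable_prod _ fun k _ => hmeas _ _
  have hAmeas : ∀ v, Measurable (A v) := fun v => hrpow.comp (hxibar_meas v)
  -- a.e. nonneg facts along paths
  have hxfac : ∀ v : Fin n → Fin 2, ∀ᵐ ω ∂P, ∀ k ∈ Finset.range n,
      0 ≤ ξ ((W v).take k) ((W v).getD k 0) ω ∧ ξ ((W v).take k) ((W v).getD k 0) ω < 1 := by
    intro v
    have h := ae_all_iff.2 fun k : Fin n => hval ((W v).take k)
    filter_upwards [h] with ω hω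
    intro k hk
    have hk' : k < n := Finset.mem_range.1 hk
    exact ⟨((hω ⟨k, hk'⟩).1 _).1, ((hω ⟨k, hk'⟩).1 _).2⟩
  have hxval : ∀ v : Fin n → Fin 2, ∀ᵐ ω ∂P,
      0 ≤ xibar ξ (W v) ω ∧ xibar ξ (W v) ω ≤ 1 := by
    intro v
    filter_upwards [hxfac v] with ω hω
    have hnn : ∀ k ∈ Finset.range (W v).length, 0 ≤ ξ ((W v).take k) ((W v).getD k 0) ω := by
      rw [hWlen v]; exact fun k hk => (hω k hk).1
    refine ⟨Finset.prod_nonneg hnn, Finset.prod_le_one hnn ?_⟩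
    rw [hWlen v]; exact fun k hk => (hω k hk).2.le
  have hA_bd : ∀ v, ∀ᵐ ω ∂P, ‖A v ω‖ ≤ 1 := by
    intro v
    filter_upwards [hxval v] with ω hω
    rw [hA, Real.norm_eq_abs, abs_of_nonneg (Real.rpow_nonneg hω.1 β)]
    exact Real.rpow_le_one hω.1 hω.2 hβ.1.le
  have hYmem : ∀ v, MemLp (Y (W v)) 2 P := fun v => (hYident (W v)).symm.memLp_snd hYL2
  have hYint : ∀ v, Integrable (Y (W v)) P := fun v => (hYmem v).integrable one_le_two
  have hYavg : ∀ v, ∫ ω, Y (W v) ω ∂P = m := fun v => (hYident (W v)).integral_eq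
  have hBmem : ∀ v, MemLp (B v) 2 P := fun v => (hYmem v).sub (memLp_const m)
  have hBint : ∀ v, Integrable (B v) P := fun v => (hBmem v).integrable one_le_two
  have hBavg : ∀ v, ∫ ω, B v ω ∂P = 0 := by
    intro v
    rw [hB]
    rw [integral_sub (hYint v) (integrable_const m), hYavg v, integral_const]
    simp
  have hBindep : ∀ u v, u ≠ v → IndepFun (B u) (B v) P := by
    intro u v huv
    have h : IndepFun (Y (W u)) (Y (W v)) P :=
      hYindep.indepFun (fun h => huv (hWinj h))
    exact h.comp (measurable_id.sub measurable_const) (measurable_id.sub measurable_const)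
  have hBBint : ∀ u v, Integrable (fun ω => B u ω * B v ω) P := by
    intro u v
    by_cases huv : u = v
    · subst huv
      have h := (memLp_two_iff_integrable_sq (hBmem u).aestronglyMeasurable).1 (hBmem u)
      simpa [pow_two] using h
    · exact (hBindep u v huv).integrable_mul (hBint u) (hBint v)
  -- factorization between the ξ and Y families
  have hfact : ∀ u v, ∫ ω, (A u ω * A v ω) * (B u ω * B v ω) ∂P
      = (∫ ω, A u ω * A v ω ∂P) * ∫ ω, B u ω * B v ω ∂P := by
    intro u v
    have hψ : Measurable fun h : List ℕ → ℝ => (h (W u) - m) * (h (W v) - m) :=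
      ((measurable_pi_apply _).sub measurable_const).mul
        ((measurable_pi_apply _).sub measurable_const)
    have hφ : Measurable fun g : List ℕ × ℕ → ℝ =>
        (∏ k ∈ Finset.range (W u).length, g ((W u).take k, (W u).getD k 0)) ^ β *
        (∏ k ∈ Finset.range (W v).length, g ((W v).take k, (W v).getD k 0)) ^ β :=
      (hrpow.comp (Finset.measurable_prod _ fun k _ => measurable_pi_apply _)).mul
        (hrpow.comp (Finset.measurable_prod _ fun k _ => measurable_pi_apply _))
    have h := (hYξindep.comp hψ hφ).symm
    have hmul := h.integral_fun_mul_eq_mul_integral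
      (((hAmeas u).mul (hAmeas v)).aestronglyMeasurable)
      (((hBmem u).aestronglyMeasurable.mul (hBmem v).aestronglyMeasurable))
    exact hmul
  have hA_bd2 : ∀ u v, ∀ᵐ ω ∂P, ‖A u ω * A v ω‖ ≤ 1 := by
    intro u v
    filter_upwards [hA_bd u, hA_bd v] with ω h1 h2
    calc ‖A u ω * A v ω‖ ≤ ‖A u ω‖ * ‖A v ω‖ := norm_mul_le _ _
      _ ≤ 1 * 1 := mul_le_mul h1 h2 (norm_nonneg _) zero_le_one
      _ = 1 := one_mul 1
  have hTint : ∀ u v, Integrable (fun ω => (A u ω * A v ω) * (B u ω * B v ω)) P := by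
    intro u v
    exact (hBBint u v).bdd_mul (((hAmeas u).mul (hAmeas v)).aestronglyMeasurable) (hA_bd2 u v)
  have hBB_off : ∀ u v, u ≠ v → ∫ ω, B u ω * B v ω ∂P = 0 := by
    intro u v huv
    have h := (hBindep u v huv).integral_fun_mul_eq_mul_integral (hBint u).1 (hBint v).1
    calc ∫ ω, B u ω * B v ω ∂P = (∫ ω, B u ω ∂P) * ∫ ω, B v ω ∂P := h
      _ = 0 := by rw [hBavg u, hBavg v]; ring
  have hBB_diag : ∀ u, ∫ ω, B u ω * B u ω ∂P = variance (Y []) P := by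
    intro u
    have h1 : variance (Y (W u)) P = variance (Y []) P := (hYident (W u)).variance_eq
    rw [← h1, variance_eq_integral (hYmeas (W u)).aemeasurable, hYavg u]
    refine integral_congr_ae (ae_of_all _ fun ω => ?_)
    simp [hB, pow_two]
  set c : Fin 2 → ℝ := fun j => ∫ ω, (ξ [] (j : ℕ) ω) ^ (2*β) ∂P with hc
  have hgetD : ∀ (u : Fin n → Fin 2) (k : ℕ) (hk : k < n), (W u).getD k 0 = ((u ⟨k, hk⟩ : Fin 2) : ℕ) := by
    intro u k hk
    have hklen : k < (W u).length := by rw [hWlen u]; exact hk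
    rw [List.getD_eq_getElem _ _ hklen]
    simp [hW]
  have hA_diag : ∀ u, ∫ ω, A u ω * A u ω ∂P = ∏ k : Fin n, c (u k) := by
    intro u
    have hpath := path_integral ξ hmeas hindep hident (2*β) hb2 (W u)
    rw [hWlen u] at hpath
    have h1 : ∫ ω, A u ω * A u ω ∂P
        = ∫ ω, ∏ k ∈ Finset.range n, (ξ ((W u).take k) ((W u).getD k 0) ω) ^ (2*β) ∂P := by
      refine integral_congr_ae ?_
      filter_upwards [hxfac u] with ω hω
      have hnn : ∀ k ∈ Finset.range n, 0 ≤ ξ ((W u).take k) ((W u).getD k 0) ω :=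
        fun k hk => (hω k hk).1
      have hxnn : 0 ≤ xibar ξ (W u) ω := by
        refine Finset.prod_nonneg ?_
        rw [hWlen u]; exact hnn
      have h2 : A u ω * A u ω = xibar ξ (W u) ω ^ (2*β) := by
        rw [hA, show (2:ℝ)*β = β + β by ring, Real.rpow_add_of_nonneg hxnn hβ.1.le hβ.1.le]
      rw [h2, xibar, hWlen u, ← Real.finset_prod_rpow _ _ hnn]
    rw [h1, hpath,
      ← Fin.prod_univ_eq_prod_range (fun k => ∫ ω, (ξ [] ((W u).getD k 0) ω) ^ (2*β) ∂P) n]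
    refine Finset.prod_congr rfl fun i _ => ?_
    rw [hgetD u i i.isLt]
  -- the pointwise expansion of the square
  have hsq : ∀ ω, (Ltilde ξ Y β n ω - m * Lmart ξ β n ω) ^ 2
      = ∑ u : Fin n → Fin 2, ∑ v : Fin n → Fin 2, (A u ω * A v ω) * (B u ω * B v ω) := by
    intro ω
    have h1 : Ltilde ξ Y β n ω - m * Lmart ξ β n ω = ∑ v : Fin n → Fin 2, A v ω * B v ω := by
      simp only [Ltilde, Lmart, Finset.mul_sum, ← Finset.sum_sub_distrib]
      refine Finset.sum_congr rfl fun v _ => ?_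
      simp only [hA, hB, hW]
      ring
    rw [h1, sq, Finset.sum_mul_sum]
    exact Finset.sum_congr rfl fun u _ => Finset.sum_congr rfl fun v _ => by ring
  have hc01 : ∫ ω, ((ξ [] 0 ω) ^ (2 * β) + (ξ [] 1 ω) ^ (2 * β)) ∂P = c 0 + c 1 := by
    have hint01 : ∀ j : ℕ, Integrable (fun ω => (ξ [] j ω) ^ (2*β)) P := by
      intro j
      refine Integrable.mono' (integrable_const 1)
        (hrpow2.comp (hmeas [] j)).aestronglyMeasurable ?_
      filter_upwards [hval []] with ω hω
      rw [Real.norm_eq_abs, abs_of_nonneg (Real.rpow_nonneg (hω.1 j).1 _)]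
      exact Real.rpow_le_one (hω.1 j).1 (hω.1 j).2.le hb2
    rw [integral_add (hint01 0) (hint01 1)]
    rfl
  calc ∫ ω, (Ltilde ξ Y β n ω - m * Lmart ξ β n ω) ^ 2 ∂P
      = ∫ ω, ∑ u : Fin n → Fin 2, ∑ v : Fin n → Fin 2,
          (A u ω * A v ω) * (B u ω * B v ω) ∂P := by
        refine integral_congr_ae (ae_of_all _ fun ω => hsq ω)
    _ = ∑ u : Fin n → Fin 2, ∑ v : Fin n → Fin 2,
          ∫ ω, (A u ω * A v ω) * (B u ω * B v ω) ∂P := by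
        rw [integral_finset_sum _ (fun u _ => integrable_finset_sum _ (fun v _ => hTint u v))]
        exact Finset.sum_congr rfl fun u _ => integral_finset_sum _ fun v _ => hTint u v
    _ = ∑ u : Fin n → Fin 2, ∫ ω, (A u ω * A u ω) * (B u ω * B u ω) ∂P := by
        refine Finset.sum_congr rfl fun u _ => ?_
        rw [Finset.sum_eq_single u]
        · intro v _ hvu
          rw [hfact u v, hBB_off u v (Ne.symm hvu), mul_zero]
        · intro h; exact absurd (Finset.mem_univ u) h
    _ = ∑ u : Fin n → Fin 2, (∏ k : Fin n, c (u k)) * variance (Y []) P := by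
        refine Finset.sum_congr rfl fun u _ => ?_
        rw [hfact u u, hBB_diag u, hA_diag u]
    _ = variance (Y []) P * (c 0 + c 1) ^ n := by
        rw [← Finset.sum_mul, sum_prod_pow n c]; ring
    _ = variance (Y []) P * (∫ ω, ((ξ [] 0 ω) ^ (2 * β) + (ξ [] 1 ω) ^ (2 * β)) ∂P) ^ n := by
        rw [hc01]
end
end

section
/- Let ((ξ_{u,i})_{i≥0})_{u∈𝕌} be an i.i.d. family of random sequences with values in the set of sequences (x_i)_{i≥0} with x_i ∈ [0,1) for all i and Σ_{i≥0} x_i = 1, let β ∈ (0,1) and let p be such that pβ > 1. Then for every k ≥ 0, Σ_{u ∈ ⋃_{t≥0} ℕ^k×{0,1}^t} E[ξ̄_u^{pβ}] ≤ (E[Σ_{j≥0} ξ_j^{pβ}])^k · (1 − E[ξ_0^{pβ} + ξ_1^{pβ}])^{−1}, where the sum is over all words of the form u = w v with w ∈ ℕ^k and v ∈ {0,1}^t for some t ≥ 0; moreover this upper bound tends to 0 as k → ∞. -/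
open MeasureTheory ProbabilityTheory Filter
open scoped ENNReal Topology

noncomputable section

private lemma tsum_pi_prod {α : Type*} (f : α → ℝ≥0∞) :
    ∀ k : ℕ, ∑' w : Fin k → α, ∏ i, f (w i) = (∑' a, f a) ^ k := by
  intro k
  induction k with
  | zero =>
      rw [pow_zero,
        tsum_eq_single (default : Fin 0 → α) (fun b hb => (hb (Subsingleton.elim b default)).elim)]
      simp
  | succ k ih =>
      have h1 : ∑' w : Fin (k + 1) → α, ∏ i, f (w i)
          = ∑' p : α × (Fin k → α), ∏ i, f ((Fin.cons p.1 p.2 : Fin (k + 1) → α) i) := by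
        rw [← (Fin.consEquiv (fun _ : Fin (k + 1) => α)).tsum_eq (fun w => ∏ i, f (w i))]
        exact tsum_congr fun p => by simp [Fin.consEquiv]
      rw [h1, ENNReal.tsum_prod
        (f := fun a w => ∏ i, f ((Fin.cons a w : Fin (k + 1) → α) i))]
      simp only [Fin.prod_univ_succ, Fin.cons_zero, Fin.cons_succ]
      simp_rw [ENNReal.tsum_mul_left]
      rw [ENNReal.tsum_mul_right, ih, pow_succ']

private lemma lintegral_prod_iIndepFun {ι Ω : Type*} [MeasurableSpace Ω] {μ : Measure Ω}
    [IsProbabilityMeasure μ] {f : ι → Ω → ℝ≥0∞} (hmeas : ∀ i, Measurable (f i))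
    (hind : iIndepFun (m := fun _ : ι => (inferInstance : MeasurableSpace ℝ≥0∞)) f μ) :
    ∀ s : Finset ι, ∫⁻ ω, ∏ i ∈ s, f i ω ∂μ = ∏ i ∈ s, ∫⁻ ω, f i ω ∂μ := by
  intro s
  induction s using Finset.cons_induction with
  | empty => simp
  | cons a s ha ih =>
      have hind2 : IndepFun (f a) (fun ω => ∏ i ∈ s, f i ω) μ := by
        have h := (hind.indepFun_finset_prod_of_notMem hmeas ha).symm
        have heq : (∏ i ∈ s, f i) = fun ω => ∏ i ∈ s, f i ω := funext fun ω => by simp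
        rwa [heq] at h
      have hmul := lintegral_mul_eq_lintegral_mul_lintegral_of_indepFun (hmeas a)
        (s.measurable_prod (fun i _ => hmeas i)) hind2
      calc ∫⁻ ω, ∏ i ∈ Finset.cons a s ha, f i ω ∂μ
          = ∫⁻ ω, (f a * fun ω' => ∏ i ∈ s, f i ω') ω ∂μ := by
            apply lintegral_congr fun ω => ?_
            simp [Finset.prod_cons]
        _ = (∫⁻ ω, f a ω ∂μ) * ∫⁻ ω, ∏ i ∈ s, f i ω ∂μ := hmul
        _ = ∏ i ∈ Finset.cons a s ha, ∫⁻ ω, f i ω ∂μ := by rw [Finset.prod_cons, ih]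

private lemma list_prod_map_eq {M : Type*} [CommMonoid M] (e : ℕ → M) :
    ∀ u : List ℕ, (u.map e).prod = ∏ k ∈ Finset.range u.length, e (u.getD k 0)
  | [] => by simp
  | a :: u => by
      rw [List.map_cons, List.prod_cons, list_prod_map_eq e u, List.length_cons,
        Finset.prod_range_succ']
      simp only [List.getD_cons_succ, List.getD_cons_zero]
      rw [mul_comm]

/-- For an i.i.d. family `(ξ_{u,·})_{u∈𝕌}` of random sequences with values
in `[0,1)` summing to `1`, `β ∈ (0,1)` and `pβ > 1`, for every `k ≥ 0` the sum of
`E[ξ̄_u^{pβ}]` over all words `u = w v` with `w ∈ ℕ^k` and `v ∈ {0,1}^t`, `t ≥ 0`, is bounded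
by `(E[Σ_{j≥0} ξ_j^{pβ}])^k · (1 - E[ξ_0^{pβ} + ξ_1^{pβ}])⁻¹`, and this upper bound tends
to `0` as `k → ∞`. -/
theorem stmt10 {Ω : Type*} [m0 : MeasurableSpace Ω] {P : Measure Ω} [IsProbabilityMeasure P]
    (ξ : List ℕ → ℕ → Ω → ℝ)
    (hmeas : ∀ u i, Measurable (ξ u i))
    (hindep : iIndepFun (m := fun _ : List ℕ => (inferInstance : MeasurableSpace (ℕ → ℝ)))
      (fun u ω i => ξ u i ω) P)
    (hident : ∀ u : List ℕ, IdentDistrib (fun ω i => ξ u i ω) (fun ω i => ξ [] i ω) P P)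
    (hval : ∀ u : List ℕ, ∀ᵐ ω ∂P,
      (∀ i, ξ u i ω ∈ Set.Ico (0 : ℝ) 1) ∧ (∑' i, ξ u i ω) = 1)
    (β : ℝ) (hβ : β ∈ Set.Ioo (0 : ℝ) 1) (p : ℝ) (hpβ : 1 < p * β) :
    (∀ k : ℕ,
      (∑' w : Fin k → ℕ, ∑' t : ℕ, ∑ v : Fin t → Fin 2,
          ∫⁻ ω, ENNReal.ofReal
            ((xibar ξ (List.ofFn w ++ List.ofFn fun i => ((v i : ℕ))) ω) ^ (p * β)) ∂P)
        ≤ (∫⁻ ω, ∑' j : ℕ, ENNReal.ofReal ((ξ [] j ω) ^ (p * β)) ∂P) ^ k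
            * (ENNReal.ofReal
                (1 - ∫ ω, ((ξ [] 0 ω) ^ (p * β) + (ξ [] 1 ω) ^ (p * β)) ∂P))⁻¹) ∧
    Tendsto (fun k : ℕ =>
        (∫⁻ ω, ∑' j : ℕ, ENNReal.ofReal ((ξ [] j ω) ^ (p * β)) ∂P) ^ k
          * (ENNReal.ofReal
              (1 - ∫ ω, ((ξ [] 0 ω) ^ (p * β) + (ξ [] 1 ω) ^ (p * β)) ∂P))⁻¹)
      atTop (𝓝 0) := by
  have hq0 : (0 : ℝ) < p * β := zero_lt_one.trans hpβ
  have mrpow : Measurable fun x : ℝ => x ^ (p * β) :=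
    (Real.continuous_rpow_const hq0.le).measurable
  set e : ℕ → ℝ≥0∞ := fun j => ∫⁻ ω, ENNReal.ofReal ((ξ [] j ω) ^ (p * β)) ∂P with he_def
  set A : ℝ≥0∞ := ∑' j, e j with hA_def
  set r : ℝ := ∫ ω, ((ξ [] 0 ω) ^ (p * β) + (ξ [] 1 ω) ^ (p * β)) ∂P with hr_def
  have hFmeas : ∀ u j, Measurable fun ω => ENNReal.ofReal ((ξ u j ω) ^ (p * β)) :=
    fun u j => (mrpow.comp (hmeas u j)).ennreal_ofReal
  -- each coordinate has the same expectation as at the root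
  have hFe : ∀ (u : List ℕ) (j : ℕ),
      ∫⁻ ω, ENNReal.ofReal ((ξ u j ω) ^ (p * β)) ∂P = e j := by
    intro u j
    have h := (hident u).comp (u := fun x : ℕ → ℝ => ENNReal.ofReal ((x j) ^ (p * β)))
      ((mrpow.comp (measurable_pi_apply j)).ennreal_ofReal)
    exact h.lintegral_eq
  -- independence of selected coordinates
  have hFind : ∀ nf : List ℕ → ℕ,
      iIndepFun (m := fun _ : List ℕ => (inferInstance : MeasurableSpace ℝ≥0∞))
        (fun u ω => ENNReal.ofReal ((ξ u (nf u) ω) ^ (p * β))) P := by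
    intro nf
    exact hindep.comp (fun u (x : ℕ → ℝ) => ENNReal.ofReal ((x (nf u)) ^ (p * β)))
      (fun u => (mrpow.comp (measurable_pi_apply (nf u))).ennreal_ofReal)
  -- key per-word identity
  have key : ∀ u : List ℕ,
      ∫⁻ ω, ENNReal.ofReal ((xibar ξ u ω) ^ (p * β)) ∂P = (u.map e).prod := by
    intro u
    set nf : List ℕ → ℕ := fun w => u.getD w.length 0 with hnf_def
    have hlen : ∀ k ∈ Finset.range u.length, (u.take k).length = k := by
      intro k hk
      rw [List.length_take]
      exact min_eq_left (Finset.mem_range.1 hk).le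
    have hnn : ∀ᵐ ω ∂P, ∀ k ∈ Finset.range u.length, 0 ≤ ξ (u.take k) (u.getD k 0) ω := by
      rw [Finset.eventually_all]
      exact fun k _ => (hval (u.take k)).mono fun ω h => (h.1 (u.getD k 0)).1
    have haeeq : ∀ᵐ ω ∂P, ENNReal.ofReal ((xibar ξ u ω) ^ (p * β))
        = ∏ k ∈ Finset.range u.length,
            ENNReal.ofReal ((ξ (u.take k) (u.getD k 0) ω) ^ (p * β)) := by
      filter_upwards [hnn] with ω hω
      rw [xibar, ← Real.finset_prod_rpow _ _ hω,
        ENNReal.ofReal_prod_of_nonneg fun k hk => Real.rpow_nonneg (hω k hk) _]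
    have hinj : ∀ a ∈ Finset.range u.length, ∀ b ∈ Finset.range u.length,
        u.take a = u.take b → a = b := by
      intro a ha b hb hab
      have := congrArg List.length hab
      rwa [hlen a ha, hlen b hb] at this
    calc ∫⁻ ω, ENNReal.ofReal ((xibar ξ u ω) ^ (p * β)) ∂P
        = ∫⁻ ω, ∏ k ∈ Finset.range u.length,
            ENNReal.ofReal ((ξ (u.take k) (u.getD k 0) ω) ^ (p * β)) ∂P :=
          lintegral_congr_ae haeeq
      _ = ∫⁻ ω, ∏ w ∈ (Finset.range u.length).image (fun k => u.take k),
            ENNReal.ofReal ((ξ w (nf w) ω) ^ (p * β)) ∂P := by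
          apply lintegral_congr fun ω => ?_
          rw [Finset.prod_image hinj]
          refine (Finset.prod_congr rfl fun k hk => ?_).symm
          rw [hnf_def]
          simp only [hlen k hk]
      _ = ∏ w ∈ (Finset.range u.length).image (fun k => u.take k),
            ∫⁻ ω, ENNReal.ofReal ((ξ w (nf w) ω) ^ (p * β)) ∂P :=
          lintegral_prod_iIndepFun (fun w => hFmeas w (nf w)) (hFind nf) _
      _ = ∏ k ∈ Finset.range u.length,
            ∫⁻ ω, ENNReal.ofReal ((ξ (u.take k) (nf (u.take k)) ω) ^ (p * β)) ∂P :=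
          Finset.prod_image hinj
      _ = ∏ k ∈ Finset.range u.length, e (u.getD k 0) := by
          refine Finset.prod_congr rfl fun k hk => ?_
          rw [show nf (u.take k) = u.getD k 0 by rw [hnf_def]; simp only [hlen k hk]]
          exact hFe _ _
      _ = (u.map e).prod := (list_prod_map_eq e u).symm
  -- the base of the geometric-type bound
  have hB : ∫⁻ ω, ∑' j : ℕ, ENNReal.ofReal ((ξ [] j ω) ^ (p * β)) ∂P = A := by
    rw [lintegral_tsum fun j => (hFmeas [] j).aemeasurable]
  -- A < 1
  have hX_ae : ∀ᵐ ω ∂P, (∑' j, ENNReal.ofReal ((ξ [] j ω) ^ (p * β))) < 1 := by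
    filter_upwards [hval []] with ω hω
    obtain ⟨h1, h2⟩ := hω
    have hnn : ∀ i, 0 ≤ ξ [] i ω := fun i => (h1 i).1
    have hsumm : Summable fun i => ξ [] i ω := by
      by_contra h
      rw [tsum_eq_zero_of_not_summable h] at h2
      norm_num at h2
    have hone : (∑' j, ENNReal.ofReal (ξ [] j ω)) = 1 := by
      rw [← ENNReal.ofReal_tsum_of_nonneg hnn hsumm, h2, ENNReal.ofReal_one]
    have hle : ∀ j, ENNReal.ofReal ((ξ [] j ω) ^ (p * β)) ≤ ENNReal.ofReal (ξ [] j ω) := by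
      intro j
      apply ENNReal.ofReal_le_ofReal
      rcases eq_or_lt_of_le (hnn j) with h | h
      · rw [← h, Real.zero_rpow (ne_of_gt hq0)]
      · calc (ξ [] j ω) ^ (p * β) ≤ (ξ [] j ω) ^ (1 : ℝ) :=
              Real.rpow_le_rpow_of_exponent_ge h (h1 j).2.le hpβ.le
          _ = ξ [] j ω := Real.rpow_one _
    obtain ⟨j0, hj0⟩ : ∃ j, 0 < ξ [] j ω := by
      by_contra h
      push_neg at h
      have hz : ∀ j, ξ [] j ω = 0 := fun j => le_antisymm (h j) (hnn j)
      simp [hz] at h2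
    have hlt : ENNReal.ofReal ((ξ [] j0 ω) ^ (p * β)) < ENNReal.ofReal (ξ [] j0 ω) := by
      rw [ENNReal.ofReal_lt_ofReal_iff hj0]
      calc (ξ [] j0 ω) ^ (p * β) < (ξ [] j0 ω) ^ (1 : ℝ) :=
            Real.rpow_lt_rpow_of_exponent_gt hj0 (h1 j0).2 hpβ
        _ = ξ [] j0 ω := Real.rpow_one _
    have hfi : (∑' j, ENNReal.ofReal ((ξ [] j ω) ^ (p * β))) ≠ ∞ := by
      refine ne_top_of_le_ne_top ?_ (ENNReal.tsum_le_tsum hle)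
      rw [hone]
      exact ENNReal.one_ne_top
    calc (∑' j, ENNReal.ofReal ((ξ [] j ω) ^ (p * β)))
        < ∑' j, ENNReal.ofReal (ξ [] j ω) := ENNReal.tsum_lt_tsum hfi hle hlt
      _ = 1 := hone
  have hXmeas : Measurable fun ω => ∑' j, ENNReal.ofReal ((ξ [] j ω) ^ (p * β)) :=
    Measurable.ennreal_tsum fun j => hFmeas [] j
  have hA1 : A < 1 := by
    rw [← hB]
    have hXle : ∀ᵐ ω ∂P, (∑' j, ENNReal.ofReal ((ξ [] j ω) ^ (p * β))) ≤ 1 :=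
      hX_ae.mono fun ω h => h.le
    have hle1 : ∫⁻ ω, ∑' j, ENNReal.ofReal ((ξ [] j ω) ^ (p * β)) ∂P ≤ 1 := by
      calc ∫⁻ ω, ∑' j, ENNReal.ofReal ((ξ [] j ω) ^ (p * β)) ∂P
          ≤ ∫⁻ _, 1 ∂P := lintegral_mono_ae hXle
        _ = 1 := by simp
    have hpos : 0 < ∫⁻ ω, (1 - ∑' j, ENNReal.ofReal ((ξ [] j ω) ^ (p * β))) ∂P := by
      rw [pos_iff_ne_zero]
      intro h0
      rw [lintegral_eq_zero_iff (f := fun ω => 1 - ∑' j, ENNReal.ofReal ((ξ [] j ω) ^ (p * β)))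
        (measurable_const.sub hXmeas)] at h0
      obtain ⟨ω, hω1, hω2⟩ := (hX_ae.and h0).exists
      have hω2 : 1 - ∑' j, ENNReal.ofReal ((ξ [] j ω) ^ (p * β)) = (0 : Ω → ℝ≥0∞) ω := hω2
      rw [Pi.zero_apply, tsub_eq_zero_iff_le] at hω2
      exact absurd hω2 (not_le.2 hω1)
    have hsum : (∫⁻ ω, ∑' j, ENNReal.ofReal ((ξ [] j ω) ^ (p * β)) ∂P)
        + ∫⁻ ω, (1 - ∑' j, ENNReal.ofReal ((ξ [] j ω) ^ (p * β))) ∂P = 1 := by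
      rw [← lintegral_add_left hXmeas]
      calc ∫⁻ ω, ((∑' j, ENNReal.ofReal ((ξ [] j ω) ^ (p * β)))
              + (1 - ∑' j, ENNReal.ofReal ((ξ [] j ω) ^ (p * β)))) ∂P
          = ∫⁻ _, 1 ∂P :=
            lintegral_congr_ae (hXle.mono fun ω h => add_tsub_cancel_of_le h)
        _ = 1 := by simp
    calc ∫⁻ ω, ∑' j, ENNReal.ofReal ((ξ [] j ω) ^ (p * β)) ∂P
        < (∫⁻ ω, ∑' j, ENNReal.ofReal ((ξ [] j ω) ^ (p * β)) ∂P)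
            + ∫⁻ ω, (1 - ∑' j, ENNReal.ofReal ((ξ [] j ω) ^ (p * β))) ∂P :=
          ENNReal.lt_add_right (ne_top_of_le_ne_top ENNReal.one_ne_top hle1) (ne_of_gt hpos)
      _ = 1 := hsum
  have he01 : e 0 + e 1 < 1 := by
    refine lt_of_le_of_lt ?_ hA1
    calc e 0 + e 1 = ∑ j ∈ ({0, 1} : Finset ℕ), e j := by
          rw [Finset.sum_pair (by norm_num : (0 : ℕ) ≠ 1)]
      _ ≤ A := ENNReal.sum_le_tsum _
  -- relate the real integral to e 0 + e 1
  have hgmeas : ∀ j, Measurable fun ω => (ξ [] j ω) ^ (p * β) :=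
    fun j => mrpow.comp (hmeas [] j)
  have hgnn : ∀ j : ℕ, 0 ≤ᵐ[P] fun ω => (ξ [] j ω) ^ (p * β) :=
    fun j => (hval []).mono fun ω h => Real.rpow_nonneg (h.1 j).1 _
  have hgint : ∀ j : ℕ, Integrable (fun ω => (ξ [] j ω) ^ (p * β)) P := by
    intro j
    refine (integrable_const (1 : ℝ)).mono' (hgmeas j).aestronglyMeasurable ?_
    filter_upwards [hval []] with ω h
    rw [Real.norm_eq_abs, abs_of_nonneg (Real.rpow_nonneg (h.1 j).1 _)]
    exact Real.rpow_le_one (h.1 j).1 (h.1 j).2.le hq0.le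
  have hofr : ENNReal.ofReal r = e 0 + e 1 := by
    rw [hr_def, integral_add (hgint 0) (hgint 1),
      ENNReal.ofReal_add (integral_nonneg_of_ae (hgnn 0)) (integral_nonneg_of_ae (hgnn 1)),
      ofReal_integral_eq_lintegral_ofReal (hgint 0) (hgnn 0),
      ofReal_integral_eq_lintegral_ofReal (hgint 1) (hgnn 1)]
  have hr0 : 0 ≤ r :=
    integral_nonneg_of_ae (((hgnn 0).and (hgnn 1)).mono fun ω h => add_nonneg h.1 h.2)
  have hconst : ENNReal.ofReal (1 - r) = 1 - (e 0 + e 1) := by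
    rw [ENNReal.ofReal_sub _ hr0, ENNReal.ofReal_one, hofr]
  have hgeom : (∑' t : ℕ, (e 0 + e 1) ^ t) = (ENNReal.ofReal (1 - r))⁻¹ := by
    rw [ENNReal.tsum_geometric, hconst]
  have hv : ∀ t : ℕ, (∑ v : Fin t → Fin 2, ∏ j, e (v j : ℕ)) = (e 0 + e 1) ^ t := by
    intro t
    rw [← tsum_fintype (L := SummationFilter.unconditional _), tsum_pi_prod (fun c : Fin 2 => e (c : ℕ)) t]
    congr 1
    rw [tsum_fintype]
    simp [Fin.sum_univ_two]
  have hterm : ∀ (k t : ℕ) (w : Fin k → ℕ) (v : Fin t → Fin 2),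
      ∫⁻ ω, ENNReal.ofReal
          ((xibar ξ (List.ofFn w ++ List.ofFn fun i => ((v i : ℕ))) ω) ^ (p * β)) ∂P
        = (∏ i, e (w i)) * ∏ j, e (v j : ℕ) := by
    intro k t w v
    rw [key, List.map_append, List.prod_append, List.map_ofFn, List.map_ofFn,
      List.prod_ofFn, List.prod_ofFn]
    rfl
  have hmain : ∀ k : ℕ,
      (∑' w : Fin k → ℕ, ∑' t : ℕ, ∑ v : Fin t → Fin 2,
          ∫⁻ ω, ENNReal.ofReal
            ((xibar ξ (List.ofFn w ++ List.ofFn fun i => ((v i : ℕ))) ω) ^ (p * β)) ∂P)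
        = A ^ k * (ENNReal.ofReal (1 - r))⁻¹ := by
    intro k
    calc (∑' w : Fin k → ℕ, ∑' t : ℕ, ∑ v : Fin t → Fin 2,
            ∫⁻ ω, ENNReal.ofReal
              ((xibar ξ (List.ofFn w ++ List.ofFn fun i => ((v i : ℕ))) ω) ^ (p * β)) ∂P)
        = ∑' w : Fin k → ℕ, ∑' t : ℕ, (∏ i, e (w i)) * (e 0 + e 1) ^ t := by
          refine tsum_congr fun w => tsum_congr fun t => ?_
          rw [← hv t, Finset.mul_sum]
          exact Finset.sum_congr rfl fun v _ => hterm k t w v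
      _ = ∑' w : Fin k → ℕ, (∏ i, e (w i)) * ∑' t : ℕ, (e 0 + e 1) ^ t :=
          tsum_congr fun w => ENNReal.tsum_mul_left
      _ = (∑' w : Fin k → ℕ, ∏ i, e (w i)) * ∑' t : ℕ, (e 0 + e 1) ^ t :=
          ENNReal.tsum_mul_right
      _ = A ^ k * (ENNReal.ofReal (1 - r))⁻¹ := by rw [tsum_pi_prod e k, hgeom, hA_def]
  have hCne : (ENNReal.ofReal (1 - r))⁻¹ ≠ ∞ := by
    rw [hconst]
    refine ENNReal.inv_ne_top.2 ?_
    rw [Ne, tsub_eq_zero_iff_le]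
    exact not_le.2 he01
  constructor
  · intro k
    rw [hB]
    exact le_of_eq (hmain k)
  · simp only [hB]
    have h0 := ENNReal.Tendsto.mul_const
      (ENNReal.tendsto_pow_atTop_nhds_zero_of_lt_one hA1) (Or.inr hCne)
    simpa using h0
end
end
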